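/- arXiv:1507.03731 — 2 statements merged into one kernel-verified Lean document; each statement's English description precedes it below -/
import Mathlib

section
/- Let a discrete network be given, let each numerical Hamiltonian g_{j,k} satisfy (G1) (monotonicity) and (G3) (C¹ regularity), and let V be a grid function that is continuous at vertices. Then for every ρ>0 there exists a grid function U, continuous at vertices, such that −ν_j(D²_hU)_{j,k} + g_{j,k}([D_hU]_{j,k}) + ρU_{j,k} = V_{j,k} for all j∈J and 1≤k≤N_j−1, and S^h(U, V−ρU)_i = 0 for every vertex i∈I; moreover any such solution satisfies ‖U‖_∞ ≤ (max_{j,k}|g_{j,k}(0,0)| + ‖V‖_∞)/ρ. -/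
open scoped BigOperators Classical

/-- A discrete network: finite index sets of vertices `I` and edges `J`,
diffusion coefficients, number of subintervals, grid steps, and the vertices
attached to the endpoints `k = 0` and `k = N j` of each edge. -/
structure Net (I J : Type) where
  nu : J → ℝ
  N : J → ℕ
  h : J → ℝ
  a : J → I
  b : J → I
  nu_pos : ∀ j, 0 < nu j
  N_ge : ∀ j, 2 ≤ N j
  h_pos : ∀ j, 0 < h j

namespace Net

variable {I J : Type} [Fintype I] [Fintype J] [Nonempty I] [Nonempty J]

/-- Forward difference quotient `(D⁺U)_{j,k}`. -/
noncomputable def Dp (net : Net I J) (U : J → ℕ → ℝ) (j : J) (k : ℕ) : ℝ :=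
  (U j (k + 1) - U j k) / net.h j

/-- Discrete gradient `[D_hU]_{j,k} = ((D⁺U)_{j,k}, (D⁺U)_{j,k-1})`. -/
noncomputable def Dh (net : Net I J) (U : J → ℕ → ℝ) (j : J) (k : ℕ) : ℝ × ℝ :=
  (net.Dp U j k, net.Dp U j (k - 1))

/-- Discrete second derivative `(D²_hU)_{j,k}`. -/
noncomputable def D2 (net : Net I J) (U : J → ℕ → ℝ) (j : J) (k : ℕ) : ℝ :=
  (U j (k - 1) - 2 * U j k + U j (k + 1)) / (net.h j) ^ 2

/-- A grid function is continuous at vertices if its endpoint values depend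
only on the attached vertex. -/
def Cont (net : Net I J) (U : J → ℕ → ℝ) : Prop :=
  (∀ j j', net.a j = net.a j' → U j 0 = U j' 0) ∧
  (∀ j j', net.b j = net.b j' → U j (net.N j) = U j' (net.N j')) ∧
  (∀ j j', net.a j = net.b j' → U j 0 = U j' (net.N j'))

/-- The maximum norm `‖U‖_∞ = max_{j, 0 ≤ k ≤ N j} |U_{j,k}|`. -/
noncomputable def supnorm (net : Net I J) (U : J → ℕ → ℝ) : ℝ :=
  Finset.univ.sup' Finset.univ_nonempty fun j =>
    (Finset.range (net.N j + 1)).sup'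
      (Finset.nonempty_range_iff.mpr (Nat.succ_ne_zero _)) fun k => |U j k|

/-- `max_{j, 0 ≤ k ≤ N j - 1} |(D⁺U)_{j,k}|`. -/
noncomputable def supDp (net : Net I J) (U : J → ℕ → ℝ) : ℝ :=
  Finset.univ.sup' Finset.univ_nonempty fun j =>
    (Finset.range (net.N j)).sup'
      (Finset.nonempty_range_iff.mpr (by have := net.N_ge j; omega)) fun k =>
        |net.Dp U j k|

/-- `max_{j∈J, 1 ≤ k ≤ N j - 1} |g_{j,k}(0,0)|`. -/
noncomputable def gmax (net : Net I J) (g : J → ℕ → ℝ × ℝ → ℝ) : ℝ :=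
  Finset.univ.sup' Finset.univ_nonempty fun j =>
    (Finset.Icc 1 (net.N j - 1)).sup'
      (Finset.nonempty_Icc.mpr (by have := net.N_ge j; omega)) fun k => |g j k (0, 0)|

/-- The discrete Kirchhoff operator `S^h(U,V)_i`. -/
noncomputable def S (net : Net I J) (U V : J → ℕ → ℝ) (i : I) : ℝ :=
  (∑ j, if net.a j = i then net.nu j * net.Dp U j 0 + net.h j / 2 * V j 0 else 0) -
  (∑ j, if net.b j = i then
      net.nu j * net.Dp U j (net.N j - 1) - net.h j / 2 * V j (net.N j) else 0)

/-- The scalar product `(U,W)₂` of grid functions. -/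
noncomputable def inner2 (net : Net I J) (U W : J → ℕ → ℝ) : ℝ :=
  (∑ j, ∑ k ∈ Finset.Ico 1 (net.N j), net.h j * U j k * W j k) +
  ∑ i, ((∑ j, if net.a j = i then net.h j / 2 * U j 0 * W j 0 else 0) +
        (∑ j, if net.b j = i then
            net.h j / 2 * U j (net.N j) * W j (net.N j) else 0))

/-- The convex compact set `K_h` of discrete probability densities. -/
def Kh (net : Net I J) : Set (J → ℕ → ℝ) :=
  {M | net.Cont M ∧ (∀ j k, k ≤ net.N j → 0 ≤ M j k) ∧
     net.inner2 M (fun _ _ => 1) = 1}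

end Net

/-- Partial derivative `∂_{q₁}g` of a numerical Hamiltonian. -/
noncomputable def dq1 (g : ℝ × ℝ → ℝ) (q : ℝ × ℝ) : ℝ := fderiv ℝ g q (1, 0)

/-- Partial derivative `∂_{q₂}g` of a numerical Hamiltonian. -/
noncomputable def dq2 (g : ℝ × ℝ → ℝ) (q : ℝ × ℝ) : ℝ := fderiv ℝ g q (0, 1)

/-- (G1): `g` is nonincreasing in `q₁` and nondecreasing in `q₂`. -/
def G1 (g : ℝ × ℝ → ℝ) : Prop :=
  (∀ q₁ q₁' q₂ : ℝ, q₁ ≤ q₁' → g (q₁', q₂) ≤ g (q₁, q₂)) ∧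
  (∀ q₁ q₂ q₂' : ℝ, q₂ ≤ q₂' → g (q₁, q₂) ≤ g (q₁, q₂'))

/-- (G4): superlinear growth `g(q₁,q₂) ≥ α((q₁⁻)²+(q₂⁺)²)^{γ/2} - C₀'`. -/
def G4 (g : ℝ × ℝ → ℝ) (α C₀' γ : ℝ) : Prop :=
  ∀ q : ℝ × ℝ,
    α * ((max (-q.1) 0) ^ 2 + (max q.2 0) ^ 2) ^ (γ / 2) - C₀' ≤ g q

namespace Net

variable {I J : Type} [Fintype I] [Fintype J] [Nonempty I] [Nonempty J]

/-- The discrete transport operator `B^h(U,M)_{j,k}` (for `1 ≤ k ≤ N j - 1`),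
omitting the `k-1` term when `k = 1` and the `k+1` term when `k = N j - 1`. -/
noncomputable def B (net : Net I J) (g : J → ℕ → ℝ × ℝ → ℝ)
    (U M : J → ℕ → ℝ) (j : J) (k : ℕ) : ℝ :=
  (1 / net.h j) *
    ((M j k * dq1 (g j k) (net.Dh U j k) -
        if k = 1 then 0 else M j (k - 1) * dq1 (g j (k - 1)) (net.Dh U j (k - 1))) +
     ((if k = net.N j - 1 then 0
        else M j (k + 1) * dq2 (g j (k + 1)) (net.Dh U j (k + 1))) -
        M j k * dq2 (g j k) (net.Dh U j k)))

/-- The discrete transition operator `T^h(M,U)_i` for the Fokker–Planck equation. -/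
noncomputable def T (net : Net I J) (g : J → ℕ → ℝ × ℝ → ℝ)
    (M U : J → ℕ → ℝ) (i : I) : ℝ :=
  (∑ j, if net.a j = i then
      net.nu j * net.Dp M j 0 + M j 1 * dq2 (g j 1) (net.Dh U j 1) else 0) -
  (∑ j, if net.b j = i then
      net.nu j * net.Dp M j (net.N j - 1) +
        M j (net.N j - 1) * dq1 (g j (net.N j - 1)) (net.Dh U j (net.N j - 1))
    else 0)

/-- The discrete Mean Field Games system. -/
def MFG (net : Net I J) (g : J → ℕ → ℝ × ℝ → ℝ)
    (Vh : (J → ℕ → ℝ) → J → ℕ → ℝ) (U M : J → ℕ → ℝ) (Λ : ℝ) : Prop :=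
  (∀ j k, 1 ≤ k → k ≤ net.N j - 1 →
      -net.nu j * net.D2 U j k + g j k (net.Dh U j k) + Λ = Vh M j k) ∧
  (∀ j k, 1 ≤ k → k ≤ net.N j - 1 →
      net.nu j * net.D2 M j k + net.B g U M j k = 0) ∧
  (∀ i, net.S U (fun j k => Vh M j k - Λ) i = 0) ∧
  (∀ i, net.T g M U i = 0) ∧
  net.Cont U ∧ M ∈ net.Kh ∧ net.inner2 U (fun _ _ => 1) = 0

/-- The perturbed discrete Mean Field Games system with residuals `A`, `B'`. -/
def pertMFG (net : Net I J) (g : J → ℕ → ℝ × ℝ → ℝ)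
    (Vh : (J → ℕ → ℝ) → J → ℕ → ℝ) (A B' : J → ℕ → ℝ)
    (Ub Mb : J → ℕ → ℝ) (Λb : ℝ) : Prop :=
  (∀ j k, 1 ≤ k → k ≤ net.N j - 1 →
      -net.nu j * net.D2 Ub j k + g j k (net.Dh Ub j k) + Λb = Vh Mb j k + A j k) ∧
  (∀ j k, 1 ≤ k → k ≤ net.N j - 1 →
      net.nu j * net.D2 Mb j k + net.B g Ub Mb j k = B' j k) ∧
  (∀ i, net.S Ub (fun j k => Vh Mb j k - Λb) i =
      (∑ j, if net.a j = i then net.h j / 2 * A j 0 else 0) +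
      (∑ j, if net.b j = i then net.h j / 2 * A j (net.N j) else 0)) ∧
  (∀ i, net.T g Mb Ub i =
      (∑ j, if net.a j = i then net.h j / 2 * B' j 0 else 0) +
      (∑ j, if net.b j = i then net.h j / 2 * B' j (net.N j) else 0)) ∧
  net.Cont Ub ∧ Mb ∈ net.Kh ∧ net.inner2 Ub (fun _ _ => 1) = 0

/-- The quantity `R^h(M,U,Ū)` appearing in the fundamental identity. -/
noncomputable def Rfun (net : Net I J) (g : J → ℕ → ℝ × ℝ → ℝ)
    (M U Ub : J → ℕ → ℝ) : ℝ :=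
  ∑ j, ∑ k ∈ Finset.Ico 1 (net.N j), net.h j * M j k *
    (g j k (net.Dh Ub j k) - g j k (net.Dh U j k) -
      ((net.Dp Ub j k - net.Dp U j k) * dq1 (g j k) (net.Dh U j k) +
       (net.Dp Ub j (k - 1) - net.Dp U j (k - 1)) * dq2 (g j k) (net.Dh U j k)))

/-- Continuous piecewise linear reconstruction `I^h(M)` of a grid function on an edge. -/
noncomputable def interp (net : Net I J) (M : J → ℕ → ℝ) (j : J) (t : ℝ) : ℝ :=
  M j ⌊t / net.h j⌋₊ +
    (t / net.h j - ⌊t / net.h j⌋₊) * (M j (⌊t / net.h j⌋₊ + 1) - M j ⌊t / net.h j⌋₊)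

end Net

section Aux
set_option linter.unusedSectionVars false

variable {I J : Type} [Fintype I] [Fintype J] [Nonempty I] [Nonempty J]

/-- Embedding of a coordinate vector (one value per vertex, one per interior
grid node) into grid functions; automatically continuous at vertices. -/
noncomputable def Net.emb (net : Net I J) (x : I ⊕ J × ℕ → ℝ) : J → ℕ → ℝ :=
  fun j k => if k = 0 then x (.inl (net.a j)) else
    if net.N j ≤ k then x (.inl (net.b j)) else x (.inr (j, k))

lemma Net.emb_zero (net : Net I J) (x : I ⊕ J × ℕ → ℝ) (j : J) :
    net.emb x j 0 = x (.inl (net.a j)) := by simp [Net.emb]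

lemma Net.emb_N (net : Net I J) (x : I ⊕ J × ℕ → ℝ) (j : J) :
    net.emb x j (net.N j) = x (.inl (net.b j)) := by
  have := net.N_ge j
  unfold Net.emb
  rw [if_neg (by omega), if_pos le_rfl]

lemma Net.emb_int (net : Net I J) (x : I ⊕ J × ℕ → ℝ) (j : J) (k : ℕ)
    (h1 : 1 ≤ k) (h2 : k ≤ net.N j - 1) : net.emb x j k = x (.inr (j, k)) := by
  have := net.N_ge j
  unfold Net.emb
  rw [if_neg (by omega), if_neg (by omega)]

lemma Net.cont_emb (net : Net I J) (x : I ⊕ J × ℕ → ℝ) : net.Cont (net.emb x) := by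
  refine ⟨fun j j' hjj => ?_, fun j j' hjj => ?_, fun j j' hjj => ?_⟩
  · rw [net.emb_zero, net.emb_zero, hjj]
  · rw [net.emb_N, net.emb_N, hjj]
  · rw [net.emb_zero, net.emb_N, hjj]

lemma Net.emb_mono (net : Net I J) {x y : I ⊕ J × ℕ → ℝ} (hxy : x ≤ y) (j : J) (k : ℕ) :
    net.emb x j k ≤ net.emb y j k := by
  unfold Net.emb; split_ifs <;> apply hxy

lemma Net.emb_abs_le (net : Net I J) {x : I ⊕ J × ℕ → ℝ} {C : ℝ}
    (hx : ∀ p, |x p| ≤ C) (j : J) (k : ℕ) : |net.emb x j k| ≤ C := by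
  unfold Net.emb; split_ifs <;> apply hx

lemma Net.emb_const (net : Net I J) (c : ℝ) (j : J) (k : ℕ) :
    net.emb (fun _ => c) j k = c := by
  unfold Net.emb; split_ifs <;> rfl

/-- The coordinate-wise residual map for the discrete HJB system. -/
noncomputable def Net.Phi (net : Net I J) (g : J → ℕ → ℝ × ℝ → ℝ) (V : J → ℕ → ℝ)
    (ρ : ℝ) (x : I ⊕ J × ℕ → ℝ) : I ⊕ J × ℕ → ℝ
  | .inl i => -net.S (net.emb x) (fun j k => V j k - ρ * net.emb x j k) i
  | .inr (j, k) =>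
      if 1 ≤ k ∧ k ≤ net.N j - 1 then
        -net.nu j * net.D2 (net.emb x) j k + g j k (net.Dh (net.emb x) j k) +
          ρ * net.emb x j k - V j k
      else 0

end Aux
section Aux2
set_option linter.unusedSectionVars false
variable {I J : Type} [Fintype I] [Fintype J] [Nonempty I] [Nonempty J]

lemma Net.Phi_inr (net : Net I J) (g : J → ℕ → ℝ × ℝ → ℝ) (V : J → ℕ → ℝ) (ρ : ℝ)
    (x : I ⊕ J × ℕ → ℝ) (j : J) (k : ℕ) (h1 : 1 ≤ k) (h2 : k ≤ net.N j - 1) :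
    net.Phi g V ρ x (.inr (j, k)) =
      -net.nu j * ((net.emb x j (k-1) - 2 * x (.inr (j,k)) + net.emb x j (k+1)) / (net.h j)^2)
      + g j k ((net.emb x j (k+1) - x (.inr (j,k))) / net.h j,
               (x (.inr (j,k)) - net.emb x j (k-1)) / net.h j)
      + ρ * x (.inr (j,k)) - V j k := by
  have hk : (k - 1) + 1 = k := by omega
  show (if 1 ≤ k ∧ k ≤ net.N j - 1 then _ else 0) = _
  rw [if_pos ⟨h1, h2⟩]
  rw [Net.D2, Net.Dh, Net.Dp, Net.Dp, hk, net.emb_int x j k h1 h2]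

lemma Net.Phi_inl (net : Net I J) (g : J → ℕ → ℝ × ℝ → ℝ) (V : J → ℕ → ℝ) (ρ : ℝ)
    (x : I ⊕ J × ℕ → ℝ) (i : I) :
    net.Phi g V ρ x (.inl i) =
      (∑ j, if net.a j = i then
          net.nu j * ((x (.inl i) - x (.inr (j, 1))) / net.h j)
            + net.h j / 2 * (ρ * x (.inl i) - V j 0) else 0)
      + ∑ j, if net.b j = i then
          net.nu j * ((x (.inl i) - x (.inr (j, net.N j - 1))) / net.h j)
            + net.h j / 2 * (ρ * x (.inl i) - V j (net.N j)) else 0 := by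
  show -net.S _ _ i = _
  rw [Net.S, neg_sub, ← Finset.sum_sub_distrib, ← Finset.sum_add_distrib]
  apply Finset.sum_congr rfl
  intro j _
  have hN := net.N_ge j
  have h1 : net.emb x j 1 = x (.inr (j, 1)) := net.emb_int x j 1 le_rfl (by omega)
  have h2 : net.emb x j (net.N j - 1) = x (.inr (j, net.N j - 1)) :=
    net.emb_int x j _ (by omega) le_rfl
  have h3 : (net.N j - 1) + 1 = net.N j := by omega
  by_cases ha : net.a j = i <;> by_cases hb : net.b j = i
  · rw [if_pos ha, if_pos ha, if_pos hb, if_pos hb, Net.Dp, Net.Dp, net.emb_zero, h3,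
      net.emb_N, h1, h2, ha, hb]; ring
  · rw [if_pos ha, if_pos ha, if_neg hb, if_neg hb, Net.Dp, net.emb_zero, h1, ha]; ring
  · rw [if_neg ha, if_neg ha, if_pos hb, if_pos hb, Net.Dp, h3, net.emb_N, h2, hb]; ring
  · rw [if_neg ha, if_neg ha, if_neg hb, if_neg hb]; ring

end Aux2
section Aux3
set_option linter.unusedSectionVars false
variable {I J : Type} [Fintype I] [Fintype J] [Nonempty I] [Nonempty J]

lemma Net.Phi_inr_out (net : Net I J) (g : J → ℕ → ℝ × ℝ → ℝ) (V : J → ℕ → ℝ) (ρ : ℝ)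
    (x : I ⊕ J × ℕ → ℝ) (j : J) (k : ℕ) (hk : ¬(1 ≤ k ∧ k ≤ net.N j - 1)) :
    net.Phi g V ρ x (.inr (j, k)) = 0 := by
  show (if 1 ≤ k ∧ k ≤ net.N j - 1 then _ else 0) = 0
  rw [if_neg hk]

lemma Net.Phi_inl_def (net : Net I J) (g : J → ℕ → ℝ × ℝ → ℝ) (V : J → ℕ → ℝ) (ρ : ℝ)
    (x : I ⊕ J × ℕ → ℝ) (i : I) :
    net.Phi g V ρ x (.inl i) =
      -net.S (net.emb x) (fun j k => V j k - ρ * net.emb x j k) i := rfl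

lemma Net.abs_le_supnorm (net : Net I J) (U : J → ℕ → ℝ) (j : J) (k : ℕ)
    (hk : k ≤ net.N j) : |U j k| ≤ net.supnorm U := by
  unfold Net.supnorm
  refine le_trans ?_ (Finset.le_sup' _ (Finset.mem_univ j))
  exact Finset.le_sup' (fun k => |U j k|) (Finset.mem_range.mpr (by omega))

lemma Net.supnorm_le (net : Net I J) (U : J → ℕ → ℝ) (c : ℝ)
    (h : ∀ j k, k ≤ net.N j → |U j k| ≤ c) : net.supnorm U ≤ c := by
  unfold Net.supnorm
  exact Finset.sup'_le _ _ fun j _ => Finset.sup'_le _ _ fun k hk =>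
    h j k (by have := Finset.mem_range.mp hk; omega)

lemma Net.supnorm_nonneg (net : Net I J) (U : J → ℕ → ℝ) : 0 ≤ net.supnorm U :=
  (abs_nonneg _).trans (net.abs_le_supnorm U (Classical.arbitrary J) 0 (Nat.zero_le _))

lemma Net.gmax_ge (net : Net I J) (g : J → ℕ → ℝ × ℝ → ℝ) (j : J) (k : ℕ)
    (hk1 : 1 ≤ k) (hk2 : k ≤ net.N j - 1) : |g j k (0, 0)| ≤ net.gmax g := by
  unfold Net.gmax
  refine le_trans ?_ (Finset.le_sup' _ (Finset.mem_univ j))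
  exact Finset.le_sup' (fun k => |g j k (0, 0)|) (Finset.mem_Icc.mpr ⟨hk1, hk2⟩)

lemma Net.gmax_nonneg (net : Net I J) (g : J → ℕ → ℝ × ℝ → ℝ) : 0 ≤ net.gmax g :=
  (abs_nonneg _).trans (net.gmax_ge g (Classical.arbitrary J) 1 le_rfl
    (by have := net.N_ge (Classical.arbitrary J); omega))

end Aux3
section Aux4
set_option linter.unusedSectionVars false
set_option maxHeartbeats 1000000
variable {I J : Type} [Fintype I] [Fintype J] [Nonempty I] [Nonempty J]

lemma Net.exists_sol (net : Net I J) (g : J → ℕ → ℝ × ℝ → ℝ)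
    (hg1 : ∀ j k, 1 ≤ k → k ≤ net.N j - 1 → G1 (g j k))
    (hg3 : ∀ j k, 1 ≤ k → k ≤ net.N j - 1 → ContDiff ℝ 1 (g j k))
    (V : J → ℕ → ℝ) (ρ : ℝ) (hρ : 0 < ρ) :
    ∃ U : J → ℕ → ℝ, net.Cont U ∧
      (∀ j k, 1 ≤ k → k ≤ net.N j - 1 →
        -net.nu j * net.D2 U j k + g j k (net.Dh U j k) + ρ * U j k = V j k) ∧
      (∀ i, net.S U (fun j k => V j k - ρ * U j k) i = 0) := by
  classical
  set C : ℝ := (net.gmax g + net.supnorm V) / ρ with hCdef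
  have hgm := net.gmax_nonneg g
  have hVm := net.supnorm_nonneg V
  have hC0 : 0 ≤ C := div_nonneg (by linarith) hρ.le
  have hρC : ρ * C = net.gmax g + net.supnorm V := by
    rw [hCdef]; field_simp
  -- radius for gradients
  set R : ℝ := 1 + Finset.univ.sup' Finset.univ_nonempty (fun j => 2 * C / net.h j) with hRdef
  have hR : ∀ j, 2 * C / net.h j ≤ R := by
    intro j
    have := Finset.le_sup' (fun j => 2 * C / net.h j) (Finset.mem_univ j)
    rw [hRdef]; linarith
  -- Lipschitz constants on the ball of radius R
  have hlip : ∀ j k, ∃ K : ℝ, 0 ≤ K ∧ ((1 ≤ k ∧ k ≤ net.N j - 1) →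
      ∀ q q' : ℝ × ℝ, ‖q‖ ≤ R → ‖q'‖ ≤ R → g j k q - g j k q' ≤ K * ‖q - q'‖) := by
    intro j k
    by_cases hk : 1 ≤ k ∧ k ≤ net.N j - 1
    · have gC := hg3 j k hk.1 hk.2
      have hdiff : Differentiable ℝ (g j k) := gC.differentiable one_ne_zero
      have hcont : Continuous (fderiv ℝ (g j k)) :=
        gC.continuous_fderiv one_ne_zero
      obtain ⟨K0, hK0⟩ := (isCompact_closedBall (0 : ℝ × ℝ) R).exists_bound_of_continuousOn
        hcont.continuousOn
      refine ⟨max K0 0, le_max_right _ _, fun _ q q' hq hq' => ?_⟩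
      have hmem : ∀ z : ℝ × ℝ, ‖z‖ ≤ R → z ∈ Metric.closedBall (0 : ℝ × ℝ) R := by
        intro z hz; simpa [Metric.mem_closedBall, dist_zero_right] using hz
      have hmv := Convex.norm_image_sub_le_of_norm_fderiv_le (fun z _ => hdiff z)
        (fun z hz => (hK0 z hz).trans (le_max_left K0 0)) (convex_closedBall 0 R)
        (hmem q' hq') (hmem q hq)
      calc g j k q - g j k q' ≤ |g j k q - g j k q'| := le_abs_self _
        _ = ‖g j k q - g j k q'‖ := (Real.norm_eq_abs _).symm
        _ ≤ max K0 0 * ‖q - q'‖ := hmv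
    · exact ⟨0, le_rfl, fun h => absurd h hk⟩
  choose Kf hKf0 hKf using hlip
  set Kmax : ℝ := Finset.univ.sup' Finset.univ_nonempty (fun j =>
    (Finset.Icc 1 (net.N j - 1)).sup'
      (Finset.nonempty_Icc.mpr (by have := net.N_ge j; omega)) fun k => Kf j k) with hKdef
  have hKmax : ∀ j k, 1 ≤ k → k ≤ net.N j - 1 → Kf j k ≤ Kmax := by
    intro j k hk1 hk2
    rw [hKdef]
    refine le_trans ?_ (Finset.le_sup' _ (Finset.mem_univ j))
    exact Finset.le_sup' (fun k => Kf j k) (Finset.mem_Icc.mpr ⟨hk1, hk2⟩)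
  have hKmax0 : 0 ≤ Kmax := by
    refine le_trans (hKf0 (Classical.arbitrary J) 1) (hKmax _ 1 le_rfl ?_)
    have := net.N_ge (Classical.arbitrary J); omega
  -- the global one-sided Lipschitz constant
  set Lmax : ℝ := ρ + ∑ j, (2 * net.nu j / net.h j ^ 2 + Kmax / net.h j
      + 2 * (net.nu j / net.h j + ρ * net.h j / 2)) with hLdef
  have hterm : ∀ j : J, 0 ≤ 2 * net.nu j / net.h j ^ 2 + Kmax / net.h j
      + 2 * (net.nu j / net.h j + ρ * net.h j / 2) := by
    intro j
    have h1 := net.h_pos j; have h2 := net.nu_pos j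
    positivity
  have hLpos : 0 < Lmax := by
    rw [hLdef]
    have := Finset.sum_nonneg (fun j (_ : j ∈ Finset.univ) => hterm j)
    linarith
  have hLj : ∀ j : J, ρ + (2 * net.nu j / net.h j ^ 2 + Kmax / net.h j) ≤ Lmax := by
    intro j
    have h1 := Finset.single_le_sum (fun j (_ : j ∈ Finset.univ) => hterm j) (Finset.mem_univ j)
    have h2 := net.h_pos j; have h3 := net.nu_pos j
    have h4 : 0 ≤ 2 * (net.nu j / net.h j + ρ * net.h j / 2) := by positivity
    rw [hLdef]; linarith
  have hLd : (∑ j, 2 * (net.nu j / net.h j + ρ * net.h j / 2)) ≤ Lmax := by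
    rw [hLdef]
    have := Finset.sum_le_sum (f := fun j => 2 * (net.nu j / net.h j + ρ * net.h j / 2))
      (g := fun j => 2 * net.nu j / net.h j ^ 2 + Kmax / net.h j
        + 2 * (net.nu j / net.h j + ρ * net.h j / 2))
      (fun j (_ : j ∈ Finset.univ) => by
        have h1 := net.h_pos j; have h2 := net.nu_pos j
        have : 0 ≤ 2 * net.nu j / net.h j ^ 2 + Kmax / net.h j := by positivity
        linarith)
    linarith
  set τ : ℝ := Lmax⁻¹ with hτdef
  have hτ : 0 < τ := inv_pos.mpr hLpos
  have hτL : τ * Lmax = 1 := inv_mul_cancel₀ hLpos.ne'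
  -- the key one-sided monotonicity estimate
  have key : ∀ x y : I ⊕ J × ℕ → ℝ, (∀ p, |x p| ≤ C) → (∀ p, |y p| ≤ C) → x ≤ y →
      ∀ p, net.Phi g V ρ y p - net.Phi g V ρ x p ≤ Lmax * (y p - x p) := by
    intro x y hx hy hxy p
    match p with
    | .inl i =>
      rw [net.Phi_inl g V ρ x i, net.Phi_inl g V ρ y i]
      have hΔ : 0 ≤ y (Sum.inl i) - x (Sum.inl i) := sub_nonneg.mpr (hxy _)
      set S' : ℝ := ∑ j, (net.nu j / net.h j + ρ * net.h j / 2) with hS'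
      have h1 : (∑ j, if net.a j = i then
            net.nu j * ((y (Sum.inl i) - y (Sum.inr (j, 1))) / net.h j)
              + net.h j / 2 * (ρ * y (Sum.inl i) - V j 0) else 0)
          - (∑ j, if net.a j = i then
            net.nu j * ((x (Sum.inl i) - x (Sum.inr (j, 1))) / net.h j)
              + net.h j / 2 * (ρ * x (Sum.inl i) - V j 0) else 0)
          ≤ S' * (y (Sum.inl i) - x (Sum.inl i)) := by
        rw [← Finset.sum_sub_distrib, hS', Finset.sum_mul]
        apply Finset.sum_le_sum
        intro j _
        have hhp := net.h_pos j; have hνp := net.nu_pos j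
        split_ifs with hc
        · have hw : x (Sum.inr (j, 1)) ≤ y (Sum.inr (j, 1)) := hxy _
          have e2 : net.nu j * ((y (Sum.inl i) - x (Sum.inl i)
                - (y (Sum.inr (j, 1)) - x (Sum.inr (j, 1)))) / net.h j)
              ≤ net.nu j * ((y (Sum.inl i) - x (Sum.inl i)) / net.h j) :=
            mul_le_mul_of_nonneg_left
              (div_le_div_of_nonneg_right (by linarith) hhp.le) hνp.le
          calc (net.nu j * ((y (Sum.inl i) - y (Sum.inr (j, 1))) / net.h j)
                + net.h j / 2 * (ρ * y (Sum.inl i) - V j 0))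
              - (net.nu j * ((x (Sum.inl i) - x (Sum.inr (j, 1))) / net.h j)
                + net.h j / 2 * (ρ * x (Sum.inl i) - V j 0))
              = net.nu j * ((y (Sum.inl i) - x (Sum.inl i)
                  - (y (Sum.inr (j, 1)) - x (Sum.inr (j, 1)))) / net.h j)
                + net.h j / 2 * (ρ * (y (Sum.inl i) - x (Sum.inl i))) := by ring
            _ ≤ net.nu j * ((y (Sum.inl i) - x (Sum.inl i)) / net.h j)
                + net.h j / 2 * (ρ * (y (Sum.inl i) - x (Sum.inl i))) := add_le_add e2 le_rfl
            _ = (net.nu j / net.h j + ρ * net.h j / 2)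
                * (y (Sum.inl i) - x (Sum.inl i)) := by ring
        · have : 0 ≤ (net.nu j / net.h j + ρ * net.h j / 2)
              * (y (Sum.inl i) - x (Sum.inl i)) :=
            mul_nonneg (by positivity) hΔ
          linarith
      have h2 : (∑ j, if net.b j = i then
            net.nu j * ((y (Sum.inl i) - y (Sum.inr (j, net.N j - 1))) / net.h j)
              + net.h j / 2 * (ρ * y (Sum.inl i) - V j (net.N j)) else 0)
          - (∑ j, if net.b j = i then
            net.nu j * ((x (Sum.inl i) - x (Sum.inr (j, net.N j - 1))) / net.h j)
              + net.h j / 2 * (ρ * x (Sum.inl i) - V j (net.N j)) else 0)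
          ≤ S' * (y (Sum.inl i) - x (Sum.inl i)) := by
        rw [← Finset.sum_sub_distrib, hS', Finset.sum_mul]
        apply Finset.sum_le_sum
        intro j _
        have hhp := net.h_pos j; have hνp := net.nu_pos j
        split_ifs with hc
        · have hw : x (Sum.inr (j, net.N j - 1)) ≤ y (Sum.inr (j, net.N j - 1)) := hxy _
          have e2 : net.nu j * ((y (Sum.inl i) - x (Sum.inl i)
                - (y (Sum.inr (j, net.N j - 1)) - x (Sum.inr (j, net.N j - 1)))) / net.h j)
              ≤ net.nu j * ((y (Sum.inl i) - x (Sum.inl i)) / net.h j) :=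
            mul_le_mul_of_nonneg_left
              (div_le_div_of_nonneg_right (by linarith) hhp.le) hνp.le
          calc (net.nu j * ((y (Sum.inl i) - y (Sum.inr (j, net.N j - 1))) / net.h j)
                + net.h j / 2 * (ρ * y (Sum.inl i) - V j (net.N j)))
              - (net.nu j * ((x (Sum.inl i) - x (Sum.inr (j, net.N j - 1))) / net.h j)
                + net.h j / 2 * (ρ * x (Sum.inl i) - V j (net.N j)))
              = net.nu j * ((y (Sum.inl i) - x (Sum.inl i)
                  - (y (Sum.inr (j, net.N j - 1)) - x (Sum.inr (j, net.N j - 1)))) / net.h j)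
                + net.h j / 2 * (ρ * (y (Sum.inl i) - x (Sum.inl i))) := by ring
            _ ≤ net.nu j * ((y (Sum.inl i) - x (Sum.inl i)) / net.h j)
                + net.h j / 2 * (ρ * (y (Sum.inl i) - x (Sum.inl i))) := add_le_add e2 le_rfl
            _ = (net.nu j / net.h j + ρ * net.h j / 2)
                * (y (Sum.inl i) - x (Sum.inl i)) := by ring
        · have : 0 ≤ (net.nu j / net.h j + ρ * net.h j / 2)
              * (y (Sum.inl i) - x (Sum.inl i)) :=
            mul_nonneg (by positivity) hΔ
          linarith
      have hdd : (∑ j, 2 * (net.nu j / net.h j + ρ * net.h j / 2)) = 2 * S' := by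
        rw [hS', Finset.mul_sum]
      have h3 : (2 * S') * (y (Sum.inl i) - x (Sum.inl i))
          ≤ Lmax * (y (Sum.inl i) - x (Sum.inl i)) :=
        mul_le_mul_of_nonneg_right (by rw [← hdd]; exact hLd) hΔ
      calc ((∑ j, if net.a j = i then
            net.nu j * ((y (Sum.inl i) - y (Sum.inr (j, 1))) / net.h j)
              + net.h j / 2 * (ρ * y (Sum.inl i) - V j 0) else 0)
          + ∑ j, if net.b j = i then
            net.nu j * ((y (Sum.inl i) - y (Sum.inr (j, net.N j - 1))) / net.h j)
              + net.h j / 2 * (ρ * y (Sum.inl i) - V j (net.N j)) else 0)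
          - ((∑ j, if net.a j = i then
            net.nu j * ((x (Sum.inl i) - x (Sum.inr (j, 1))) / net.h j)
              + net.h j / 2 * (ρ * x (Sum.inl i) - V j 0) else 0)
          + ∑ j, if net.b j = i then
            net.nu j * ((x (Sum.inl i) - x (Sum.inr (j, net.N j - 1))) / net.h j)
              + net.h j / 2 * (ρ * x (Sum.inl i) - V j (net.N j)) else 0)
          = ((∑ j, if net.a j = i then
            net.nu j * ((y (Sum.inl i) - y (Sum.inr (j, 1))) / net.h j)
              + net.h j / 2 * (ρ * y (Sum.inl i) - V j 0) else 0)
          - (∑ j, if net.a j = i then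
            net.nu j * ((x (Sum.inl i) - x (Sum.inr (j, 1))) / net.h j)
              + net.h j / 2 * (ρ * x (Sum.inl i) - V j 0) else 0))
          + ((∑ j, if net.b j = i then
            net.nu j * ((y (Sum.inl i) - y (Sum.inr (j, net.N j - 1))) / net.h j)
              + net.h j / 2 * (ρ * y (Sum.inl i) - V j (net.N j)) else 0)
          - (∑ j, if net.b j = i then
            net.nu j * ((x (Sum.inl i) - x (Sum.inr (j, net.N j - 1))) / net.h j)
              + net.h j / 2 * (ρ * x (Sum.inl i) - V j (net.N j)) else 0)) := by ring
        _ ≤ S' * (y (Sum.inl i) - x (Sum.inl i)) + S' * (y (Sum.inl i) - x (Sum.inl i)) :=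
            add_le_add h1 h2
        _ = (2 * S') * (y (Sum.inl i) - x (Sum.inl i)) := by ring
        _ ≤ Lmax * (y (Sum.inl i) - x (Sum.inl i)) := h3
    | .inr (j, k) =>
      by_cases hk : 1 ≤ k ∧ k ≤ net.N j - 1
      · obtain ⟨hk1, hk2⟩ := hk
        rw [net.Phi_inr g V ρ x j k hk1 hk2, net.Phi_inr g V ρ y j k hk1 hk2]
        have hhp := net.h_pos j
        have hνp := net.nu_pos j
        set A := net.emb x j (k-1) with hA
        set A' := net.emb y j (k-1) with hA'
        set Cc := net.emb x j (k+1) with hCc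
        set Cc' := net.emb y j (k+1) with hCc'
        set M := x (Sum.inr (j,k)) with hM
        set M' := y (Sum.inr (j,k)) with hM'
        have hAle : A ≤ A' := net.emb_mono hxy j (k-1)
        have hCle : Cc ≤ Cc' := net.emb_mono hxy j (k+1)
        have hMle : M ≤ M' := hxy _
        have hAb : |A| ≤ C := net.emb_abs_le hx j (k-1)
        have hA'b : |A'| ≤ C := net.emb_abs_le hy j (k-1)
        have hCb : |Cc| ≤ C := net.emb_abs_le hx j (k+1)
        have hC'b : |Cc'| ≤ C := net.emb_abs_le hy j (k+1)
        have hMb : |M| ≤ C := hx _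
        have hM'b : |M'| ≤ C := hy _
        have habs2 : ∀ u v : ℝ, |u| ≤ C → |v| ≤ C → |u - v| ≤ 2 * C := by
          intro u v hu hv
          have h := abs_sub_le u 0 v
          simp only [sub_zero, zero_sub, abs_neg] at h
          linarith
        have hnormle : ∀ u v u' v' : ℝ, |u| ≤ C → |v| ≤ C → |u'| ≤ C → |v'| ≤ C →
            ‖(((u - v) / net.h j, (u' - v') / net.h j) : ℝ × ℝ)‖ ≤ R := by
          intro u v u' v' hu hv hu' hv'
          rw [Prod.norm_def]
          apply max_le
          · show ‖(u - v) / net.h j‖ ≤ R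
            rw [Real.norm_eq_abs, abs_div, abs_of_pos hhp]
            refine le_trans ?_ (hR j)
            gcongr
            exact habs2 u v hu hv
          · show ‖(u' - v') / net.h j‖ ≤ R
            rw [Real.norm_eq_abs, abs_div, abs_of_pos hhp]
            refine le_trans ?_ (hR j)
            gcongr
            exact habs2 u' v' hu' hv'
        have lips := hKf j k ⟨hk1, hk2⟩ ((Cc - M') / net.h j, (M' - A) / net.h j)
          ((Cc - M) / net.h j, (M - A) / net.h j)
          (hnormle Cc M' M' A hCb hM'b hM'b hAb)
          (hnormle Cc M M A hCb hMb hMb hAb)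
        have hdiffpt : (((Cc - M') / net.h j, (M' - A) / net.h j) : ℝ × ℝ)
            - ((Cc - M) / net.h j, (M - A) / net.h j)
            = ((M - M') / net.h j, (M' - M) / net.h j) := by
          rw [Prod.mk_sub_mk]
          refine Prod.ext ?_ ?_ <;> simp <;> ring
        have hnd : ‖(((M - M') / net.h j, (M' - M) / net.h j) : ℝ × ℝ)‖
            = (M' - M) / net.h j := by
          rw [Prod.norm_def]
          have e1 : ‖(((M - M') / net.h j, (M' - M) / net.h j) : ℝ × ℝ).1‖
              = (M' - M) / net.h j := by
            show ‖(M - M') / net.h j‖ = _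
            rw [Real.norm_eq_abs, abs_div, abs_of_pos hhp, abs_sub_comm,
              abs_of_nonneg (by linarith)]
          have e2 : ‖(((M - M') / net.h j, (M' - M) / net.h j) : ℝ × ℝ).2‖
              = (M' - M) / net.h j := by
            show ‖(M' - M) / net.h j‖ = _
            rw [Real.norm_eq_abs, abs_div, abs_of_pos hhp,
              abs_of_nonneg (by linarith)]
          rw [e1, e2, max_self]
        rw [hdiffpt, hnd] at lips
        have hKle : Kf j k * ((M' - M) / net.h j) ≤ Kmax * ((M' - M) / net.h j) :=
          mul_le_mul_of_nonneg_right (hKmax j k hk1 hk2)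
            (div_nonneg (by linarith) hhp.le)
        have hg := hg1 j k hk1 hk2
        have g1 : g j k ((Cc' - M') / net.h j, (M' - A') / net.h j)
            ≤ g j k ((Cc - M') / net.h j, (M' - A') / net.h j) :=
          hg.1 _ _ _ (by gcongr)
        have g2 : g j k ((Cc - M') / net.h j, (M' - A') / net.h j)
            ≤ g j k ((Cc - M') / net.h j, (M' - A) / net.h j) :=
          hg.2 _ _ _ (by gcongr)
        have hd : -net.nu j * ((A' - 2 * M' + Cc') / (net.h j) ^ 2)
            - (-net.nu j * ((A - 2 * M + Cc) / (net.h j) ^ 2))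
            ≤ 2 * net.nu j / (net.h j) ^ 2 * (M' - M) := by
          have e : -net.nu j * ((A' - 2 * M' + Cc') / (net.h j) ^ 2)
              - (-net.nu j * ((A - 2 * M + Cc) / (net.h j) ^ 2))
              = net.nu j * (((A - A') + (Cc - Cc') + 2 * (M' - M)) / (net.h j) ^ 2) := by
            ring
          have e2 : 2 * net.nu j / (net.h j) ^ 2 * (M' - M)
              = net.nu j * ((2 * (M' - M)) / (net.h j) ^ 2) := by ring
          rw [e, e2]
          exact mul_le_mul_of_nonneg_left
            (div_le_div_of_nonneg_right (by linarith) (by positivity)) hνp.le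
        have hprod : (ρ + (2 * net.nu j / (net.h j) ^ 2 + Kmax / net.h j)) * (M' - M)
            ≤ Lmax * (M' - M) := mul_le_mul_of_nonneg_right (hLj j) (by linarith)
        have hgd : g j k ((Cc' - M') / net.h j, (M' - A') / net.h j)
            - g j k ((Cc - M) / net.h j, (M - A) / net.h j)
            ≤ Kmax * ((M' - M) / net.h j) := by linarith
        calc -net.nu j * ((A' - 2 * M' + Cc') / (net.h j) ^ 2)
              + g j k ((Cc' - M') / net.h j, (M' - A') / net.h j) + ρ * M' - V j k
            - (-net.nu j * ((A - 2 * M + Cc) / (net.h j) ^ 2)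
              + g j k ((Cc - M) / net.h j, (M - A) / net.h j) + ρ * M - V j k)
            = (-net.nu j * ((A' - 2 * M' + Cc') / (net.h j) ^ 2)
                - (-net.nu j * ((A - 2 * M + Cc) / (net.h j) ^ 2)))
              + (g j k ((Cc' - M') / net.h j, (M' - A') / net.h j)
                - g j k ((Cc - M) / net.h j, (M - A) / net.h j))
              + ρ * (M' - M) := by ring
          _ ≤ 2 * net.nu j / (net.h j) ^ 2 * (M' - M) + Kmax * ((M' - M) / net.h j)
              + ρ * (M' - M) := add_le_add (add_le_add hd hgd) le_rfl
          _ = (ρ + (2 * net.nu j / (net.h j) ^ 2 + Kmax / net.h j)) * (M' - M) := by ring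
          _ ≤ Lmax * (M' - M) := hprod
      · rw [net.Phi_inr_out g V ρ x j k hk, net.Phi_inr_out g V ρ y j k hk]
        have hd : 0 ≤ y (Sum.inr (j, k)) - x (Sum.inr (j, k)) := sub_nonneg.mpr (hxy _)
        have := mul_nonneg hLpos.le hd
        linarith

  -- signs at the constant functions ±C
  have hPlus : ∀ p, 0 ≤ net.Phi g V ρ (fun _ => C) p := by
    intro p
    match p with
    | .inl i =>
      rw [net.Phi_inl g V ρ (fun _ => C) i]
      apply add_nonneg <;> apply Finset.sum_nonneg <;> intro j _ <;> split_ifs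
      · have h1 := net.h_pos j
        have hV1 : V j 0 ≤ net.supnorm V :=
          (le_abs_self _).trans (net.abs_le_supnorm V j 0 (Nat.zero_le _))
        have e : net.nu j * (((C:ℝ) - C) / net.h j) = 0 := by ring
        have : 0 ≤ net.h j / 2 * (ρ * C - V j 0) := by
          apply mul_nonneg (by positivity); linarith
        linarith
      · exact le_rfl
      · have h1 := net.h_pos j
        have hV1 : V j (net.N j) ≤ net.supnorm V :=
          (le_abs_self _).trans (net.abs_le_supnorm V j (net.N j) le_rfl)
        have e : net.nu j * (((C:ℝ) - C) / net.h j) = 0 := by ring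
        have : 0 ≤ net.h j / 2 * (ρ * C - V j (net.N j)) := by
          apply mul_nonneg (by positivity); linarith
        linarith
      · exact le_rfl
    | .inr (j, k) =>
      by_cases hk : 1 ≤ k ∧ k ≤ net.N j - 1
      · rw [net.Phi_inr g V ρ (fun _ => C) j k hk.1 hk.2]
        simp only [Net.emb_const]
        have hg0 : -net.gmax g ≤ g j k (0, 0) :=
          neg_le_of_abs_le (net.gmax_ge g j k hk.1 hk.2)
        have hV1 : V j k ≤ net.supnorm V :=
          (le_abs_self _).trans (net.abs_le_supnorm V j k (by have := net.N_ge j; omega))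
        have e1 : ((C:ℝ) - 2 * C + C) / (net.h j) ^ 2 = 0 := by ring
        have e2 : ((C:ℝ) - C) / net.h j = 0 := by ring
        rw [e1, e2]
        have : -net.nu j * (0:ℝ) = 0 := by ring
        rw [this]
        linarith
      · rw [net.Phi_inr_out g V ρ (fun _ => C) j k hk]

  have hMinus : ∀ p, net.Phi g V ρ (fun _ => -C) p ≤ 0 := by
    intro p
    match p with
    | .inl i =>
      rw [net.Phi_inl g V ρ (fun _ => -C) i]
      refine add_nonpos ?_ ?_ <;> apply Finset.sum_nonpos <;> intro j _ <;> split_ifs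
      · have h1 := net.h_pos j
        have hV1 : -net.supnorm V ≤ V j 0 :=
          neg_le_of_abs_le (net.abs_le_supnorm V j 0 (Nat.zero_le _))
        have e : net.nu j * ((-(C:ℝ) - -C) / net.h j) = 0 := by ring
        have : net.h j / 2 * (ρ * -C - V j 0) ≤ 0 := by
          apply mul_nonpos_of_nonneg_of_nonpos (by positivity); linarith
        linarith
      · exact le_rfl
      · have h1 := net.h_pos j
        have hV1 : -net.supnorm V ≤ V j (net.N j) :=
          neg_le_of_abs_le (net.abs_le_supnorm V j (net.N j) le_rfl)
        have e : net.nu j * ((-(C:ℝ) - -C) / net.h j) = 0 := by ring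
        have : net.h j / 2 * (ρ * -C - V j (net.N j)) ≤ 0 := by
          apply mul_nonpos_of_nonneg_of_nonpos (by positivity); linarith
        linarith
      · exact le_rfl
    | .inr (j, k) =>
      by_cases hk : 1 ≤ k ∧ k ≤ net.N j - 1
      · rw [net.Phi_inr g V ρ (fun _ => -C) j k hk.1 hk.2]
        simp only [Net.emb_const]
        have hg0 : g j k (0, 0) ≤ net.gmax g :=
          (le_abs_self _).trans (net.gmax_ge g j k hk.1 hk.2)
        have hV1 : -net.supnorm V ≤ V j k :=
          neg_le_of_abs_le (net.abs_le_supnorm V j k (by have := net.N_ge j; omega))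
        have e1 : (-(C:ℝ) - 2 * -C + -C) / (net.h j) ^ 2 = 0 := by ring
        have e2 : (-(C:ℝ) - -C) / net.h j = 0 := by ring
        rw [e1, e2]
        have e3 : -net.nu j * (0:ℝ) = 0 := by ring
        rw [e3]
        linarith
      · rw [net.Phi_inr_out g V ρ (fun _ => -C) j k hk]

  -- the iteration map
  set T : (I ⊕ J × ℕ → ℝ) → (I ⊕ J × ℕ → ℝ) :=
    fun x p => x p - τ * net.Phi g V ρ x p with hTdef
  have hTmono : ∀ x y, (∀ p, |x p| ≤ C) → (∀ p, |y p| ≤ C) → x ≤ y →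
      ∀ p, T x p ≤ T y p := by
    intro x y hx hy hxy p
    have hk := key x y hx hy hxy p
    have hΔ := hxy p
    have h2 : τ * (net.Phi g V ρ y p - net.Phi g V ρ x p) ≤ τ * (Lmax * (y p - x p)) :=
      mul_le_mul_of_nonneg_left hk hτ.le
    have h3 : τ * (Lmax * (y p - x p)) = (τ * Lmax) * (y p - x p) := by ring
    rw [h3, hτL, one_mul] at h2
    simp only [hTdef]
    linarith
  have habsC : ∀ q : I ⊕ J × ℕ, |(fun _ => C : I ⊕ J × ℕ → ℝ) q| ≤ C := by
    intro q; rw [abs_of_nonneg hC0]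
  have habsC' : ∀ q : I ⊕ J × ℕ, |(fun _ => -C : I ⊕ J × ℕ → ℝ) q| ≤ C := by
    intro q; rw [abs_neg, abs_of_nonneg hC0]
  have hbox : ∀ x, (∀ p, |x p| ≤ C) → ∀ p, |T x p| ≤ C := by
    intro x hx p
    have hle : x ≤ (fun _ => C) := fun q => (abs_le.mp (hx q)).2
    have hge : (fun _ => -C : I ⊕ J × ℕ → ℝ) ≤ x := fun q => (abs_le.mp (hx q)).1
    have h1 := hTmono x _ hx habsC hle p
    have h2 := hTmono _ x habsC' hx hge p
    have e1 : T (fun _ => C) p ≤ C := by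
      simp only [hTdef]
      have := hPlus p
      nlinarith
    have e2 : -C ≤ T (fun _ => -C) p := by
      simp only [hTdef]
      have := hMinus p
      nlinarith
    exact abs_le.mpr ⟨le_trans e2 h2, le_trans h1 e1⟩
  -- Knaster–Tarski on the complete lattice of box-valued functions
  haveI : Fact ((-C : ℝ) ≤ C) := ⟨by linarith⟩
  have hmem : ∀ (y : (I ⊕ J × ℕ) → Set.Icc (-C : ℝ) C) p,
      T (fun q => (y q : ℝ)) p ∈ Set.Icc (-C : ℝ) C := by
    intro y p
    have hb : ∀ q, |(y q : ℝ)| ≤ C := fun q => abs_le.mpr ⟨(y q).2.1, (y q).2.2⟩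
    exact Set.mem_Icc.mpr (abs_le.mp (hbox _ hb p))
  set F : ((I ⊕ J × ℕ) → Set.Icc (-C : ℝ) C) →o ((I ⊕ J × ℕ) → Set.Icc (-C : ℝ) C) :=
    ⟨fun y p => ⟨T (fun q => (y q : ℝ)) p, hmem y p⟩, by
      intro y y' hyy' p
      have hb : ∀ q, |(y q : ℝ)| ≤ C := fun q => abs_le.mpr ⟨(y q).2.1, (y q).2.2⟩
      have hb' : ∀ q, |(y' q : ℝ)| ≤ C := fun q => abs_le.mpr ⟨(y' q).2.1, (y' q).2.2⟩
      exact Subtype.mk_le_mk.mpr (hTmono _ _ hb hb' (fun q => hyy' q) p)⟩ with hFdef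
  have hfix : F F.lfp = F.lfp := F.map_lfp
  set x₀ : I ⊕ J × ℕ → ℝ := fun q => ((F.lfp) q : ℝ) with hx₀def
  have hx₀ : ∀ p, T x₀ p = x₀ p := by
    intro p
    have := congrFun hfix p
    exact congrArg Subtype.val this
  have hPhi0 : ∀ p, net.Phi g V ρ x₀ p = 0 := by
    intro p
    have h := hx₀ p
    simp only [hTdef] at h
    have h2 : τ * net.Phi g V ρ x₀ p = 0 := by linarith
    exact (mul_eq_zero.mp h2).resolve_left hτ.ne'
  refine ⟨net.emb x₀, net.cont_emb x₀, ?_, ?_⟩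
  · intro j k hk1 hk2
    have h := hPhi0 (.inr (j, k))
    have e : net.Phi g V ρ x₀ (.inr (j, k)) =
        -net.nu j * net.D2 (net.emb x₀) j k + g j k (net.Dh (net.emb x₀) j k)
          + ρ * net.emb x₀ j k - V j k := by
      show (if 1 ≤ k ∧ k ≤ net.N j - 1 then _ else 0) = _
      rw [if_pos ⟨hk1, hk2⟩]
    rw [e] at h
    linarith
  · intro i
    have h := hPhi0 (.inl i)
    rw [net.Phi_inl_def] at h
    linarith

end Aux4
section Aux5
set_option linter.unusedSectionVars false
set_option maxHeartbeats 1000000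
variable {I J : Type} [Fintype I] [Fintype J] [Nonempty I] [Nonempty J]

lemma Net.sol_max (net : Net I J) (g : J → ℕ → ℝ × ℝ → ℝ)
    (hg1 : ∀ j k, 1 ≤ k → k ≤ net.N j - 1 → G1 (g j k))
    (V : J → ℕ → ℝ) (ρ : ℝ) (hρ : 0 < ρ) (U : J → ℕ → ℝ) (hU : net.Cont U)
    (heq : ∀ j k, 1 ≤ k → k ≤ net.N j - 1 →
      -net.nu j * net.D2 U j k + g j k (net.Dh U j k) + ρ * U j k = V j k)
    (hS : ∀ i, net.S U (fun j k => V j k - ρ * U j k) i = 0) :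
    ∀ j k, k ≤ net.N j → ρ * U j k ≤ net.gmax g + net.supnorm V := by
  classical
  have hgm := net.gmax_nonneg g
  set Mx : ℝ := Finset.univ.sup' Finset.univ_nonempty (fun j =>
    (Finset.range (net.N j + 1)).sup'
      (Finset.nonempty_range_iff.mpr (Nat.succ_ne_zero _)) fun k => U j k) with hMxdef
  have hMle : ∀ j k, k ≤ net.N j → U j k ≤ Mx := by
    intro j k hk
    rw [hMxdef]
    refine le_trans ?_ (Finset.le_sup' _ (Finset.mem_univ j))
    exact Finset.le_sup' (fun k => U j k) (Finset.mem_range.mpr (by omega))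
  suffices hclaim : ρ * Mx ≤ net.gmax g + net.supnorm V by
    intro j k hk
    have h1 := hMle j k hk
    nlinarith
  by_contra hgt
  push_neg at hgt
  obtain ⟨j0, -, hj0⟩ := Finset.exists_mem_eq_sup' Finset.univ_nonempty (fun j =>
    (Finset.range (net.N j + 1)).sup'
      (Finset.nonempty_range_iff.mpr (Nat.succ_ne_zero _)) fun k => U j k)
  obtain ⟨k0, hk0mem, hk0⟩ := Finset.exists_mem_eq_sup'
    (s := Finset.range (net.N j0 + 1))
    (Finset.nonempty_range_iff.mpr (Nat.succ_ne_zero _)) (fun k => U j0 k)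
  have hk0N : k0 ≤ net.N j0 := by have := Finset.mem_range.mp hk0mem; omega
  have hU0 : U j0 k0 = Mx := by rw [hMxdef, hj0, hk0]
  have hVlt : ∀ j k, k ≤ net.N j → V j k < ρ * Mx := by
    intro j k hk
    have h1 : V j k ≤ net.supnorm V := (le_abs_self _).trans (net.abs_le_supnorm V j k hk)
    linarith
  by_cases h0 : k0 = 0
  · -- maximum attained at the vertex a j0
    subst h0
    have hSi := hS (net.a j0)
    rw [Net.S] at hSi
    have ha : (∑ j', if net.a j' = net.a j0 then
        net.nu j' * net.Dp U j' 0 + net.h j' / 2 * (V j' 0 - ρ * U j' 0) else 0)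
        ≤ ∑ j', if net.a j' = net.a j0 then net.h j' / 2 * (V j' 0 - ρ * Mx) else 0 := by
      apply Finset.sum_le_sum
      intro j' _
      split_ifs with hc
      · have hU'0 : U j' 0 = Mx := by rw [hU.1 j' j0 hc]; exact hU0
        have hhp := net.h_pos j'
        have hDp : net.nu j' * net.Dp U j' 0 ≤ 0 := by
          apply mul_nonpos_of_nonneg_of_nonpos (net.nu_pos j').le
          rw [Net.Dp]
          apply div_nonpos_of_nonpos_of_nonneg _ hhp.le
          have h1 := hMle j' (0 + 1) (by have := net.N_ge j'; omega)
          linarith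
        rw [hU'0]
        linarith
      · exact le_rfl
    have hb : (∑ j', if net.b j' = net.a j0 then
          -(net.h j' / 2 * (V j' (net.N j') - ρ * Mx)) else 0)
        ≤ ∑ j', if net.b j' = net.a j0 then
          net.nu j' * net.Dp U j' (net.N j' - 1)
            - net.h j' / 2 * (V j' (net.N j') - ρ * U j' (net.N j')) else 0 := by
      apply Finset.sum_le_sum
      intro j' _
      split_ifs with hc
      · have hU'N : U j' (net.N j') = Mx := by
          rw [← hU.2.2 j0 j' hc.symm]; exact hU0
        have hhp := net.h_pos j'
        have hN2 := net.N_ge j'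
        have hDp : 0 ≤ net.nu j' * net.Dp U j' (net.N j' - 1) := by
          apply mul_nonneg (net.nu_pos j').le
          rw [Net.Dp]
          apply div_nonneg _ hhp.le
          have e : net.N j' - 1 + 1 = net.N j' := by omega
          rw [e, hU'N]
          have := hMle j' (net.N j' - 1) (by omega)
          linarith
        rw [hU'N]
        linarith
      · exact le_rfl
    have hQa_neg : (∑ j', if net.a j' = net.a j0 then
        net.h j' / 2 * (V j' 0 - ρ * Mx) else 0) < 0 := by
      have hlt := Finset.sum_lt_sum
        (f := fun j' => if net.a j' = net.a j0 then net.h j' / 2 * (V j' 0 - ρ * Mx) else 0)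
        (g := fun _ : J => (0:ℝ)) (s := Finset.univ)
        (fun j' _ => by
          beta_reduce
          split_ifs with hc
          · have hhp := net.h_pos j'
            have := hVlt j' 0 (Nat.zero_le _)
            exact mul_nonpos_of_nonneg_of_nonpos (by positivity) (by linarith)
          · exact le_rfl)
        ⟨j0, Finset.mem_univ j0, by
          beta_reduce
          rw [if_pos rfl]
          exact mul_neg_of_pos_of_neg (by have := net.h_pos j0; positivity)
            (by linarith [hVlt j0 0 (Nat.zero_le _)])⟩
      simpa using hlt
    have hQb_nonneg : 0 ≤ ∑ j', if net.b j' = net.a j0 then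
        -(net.h j' / 2 * (V j' (net.N j') - ρ * Mx)) else 0 := by
      apply Finset.sum_nonneg
      intro j' _
      split_ifs with hc
      · have hhp := net.h_pos j'
        have := hVlt j' (net.N j') le_rfl
        have h2 : net.h j' / 2 * (V j' (net.N j') - ρ * Mx) ≤ 0 :=
          mul_nonpos_of_nonneg_of_nonpos (by positivity) (by linarith)
        linarith
      · exact le_rfl
    linarith
  · by_cases hN : k0 = net.N j0
    · -- maximum attained at the vertex b j0
      have hU0N : U j0 (net.N j0) = Mx := by rw [← hN]; exact hU0
      have hSi := hS (net.b j0)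
      rw [Net.S] at hSi
      have ha : (∑ j', if net.a j' = net.b j0 then
          net.nu j' * net.Dp U j' 0 + net.h j' / 2 * (V j' 0 - ρ * U j' 0) else 0)
          ≤ ∑ j', if net.a j' = net.b j0 then net.h j' / 2 * (V j' 0 - ρ * Mx) else 0 := by
        apply Finset.sum_le_sum
        intro j' _
        split_ifs with hc
        · have hU'0 : U j' 0 = Mx := by rw [hU.2.2 j' j0 hc]; exact hU0N
          have hhp := net.h_pos j'
          have hDp : net.nu j' * net.Dp U j' 0 ≤ 0 := by
            apply mul_nonpos_of_nonneg_of_nonpos (net.nu_pos j').le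
            rw [Net.Dp]
            apply div_nonpos_of_nonpos_of_nonneg _ hhp.le
            have h1 := hMle j' (0 + 1) (by have := net.N_ge j'; omega)
            linarith
          rw [hU'0]
          linarith
        · exact le_rfl
      have hb : (∑ j', if net.b j' = net.b j0 then
            -(net.h j' / 2 * (V j' (net.N j') - ρ * Mx)) else 0)
          ≤ ∑ j', if net.b j' = net.b j0 then
            net.nu j' * net.Dp U j' (net.N j' - 1)
              - net.h j' / 2 * (V j' (net.N j') - ρ * U j' (net.N j')) else 0 := by
        apply Finset.sum_le_sum
        intro j' _
        split_ifs with hc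
        · have hU'N : U j' (net.N j') = Mx := by rw [hU.2.1 j' j0 hc]; exact hU0N
          have hhp := net.h_pos j'
          have hN2 := net.N_ge j'
          have hDp : 0 ≤ net.nu j' * net.Dp U j' (net.N j' - 1) := by
            apply mul_nonneg (net.nu_pos j').le
            rw [Net.Dp]
            apply div_nonneg _ hhp.le
            have e : net.N j' - 1 + 1 = net.N j' := by omega
            rw [e, hU'N]
            have := hMle j' (net.N j' - 1) (by omega)
            linarith
          rw [hU'N]
          linarith
        · exact le_rfl
      have hQa_nonpos : (∑ j', if net.a j' = net.b j0 then
          net.h j' / 2 * (V j' 0 - ρ * Mx) else 0) ≤ 0 := by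
        apply Finset.sum_nonpos
        intro j' _
        split_ifs with hc
        · have hhp := net.h_pos j'
          have := hVlt j' 0 (Nat.zero_le _)
          exact mul_nonpos_of_nonneg_of_nonpos (by positivity) (by linarith)
        · exact le_rfl
      have hQb_pos : 0 < ∑ j', if net.b j' = net.b j0 then
          -(net.h j' / 2 * (V j' (net.N j') - ρ * Mx)) else 0 := by
        have hlt := Finset.sum_lt_sum
          (f := fun _ : J => (0:ℝ))
          (g := fun j' => if net.b j' = net.b j0 then
            -(net.h j' / 2 * (V j' (net.N j') - ρ * Mx)) else 0) (s := Finset.univ)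
          (fun j' _ => by
            beta_reduce
            split_ifs with hc
            · have hhp := net.h_pos j'
              have := hVlt j' (net.N j') le_rfl
              have h2 : net.h j' / 2 * (V j' (net.N j') - ρ * Mx) ≤ 0 :=
                mul_nonpos_of_nonneg_of_nonpos (by positivity) (by linarith)
              linarith
            · exact le_rfl)
          ⟨j0, Finset.mem_univ j0, by
            beta_reduce
            rw [if_pos rfl]
            have hhp := net.h_pos j0
            have := hVlt j0 (net.N j0) le_rfl
            have h2 : net.h j0 / 2 * (V j0 (net.N j0) - ρ * Mx) < 0 :=
              mul_neg_of_pos_of_neg (by positivity) (by linarith)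
            linarith⟩
        simpa using hlt
      linarith
    · -- interior maximum
      have hk1 : 1 ≤ k0 := by omega
      have hk2 : k0 ≤ net.N j0 - 1 := by have := net.N_ge j0; omega
      have heqk := heq j0 k0 hk1 hk2
      rw [Net.D2, Net.Dh, Net.Dp, Net.Dp] at heqk
      have e : k0 - 1 + 1 = k0 := by omega
      rw [e] at heqk
      set q1 : ℝ := (U j0 (k0 + 1) - U j0 k0) / net.h j0 with hq1def
      set q2 : ℝ := (U j0 k0 - U j0 (k0 - 1)) / net.h j0 with hq2def
      have hhp := net.h_pos j0
      have hup : U j0 (k0 + 1) ≤ U j0 k0 := by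
        rw [hU0]; exact hMle j0 (k0 + 1) (by omega)
      have hdown : U j0 (k0 - 1) ≤ U j0 k0 := by
        rw [hU0]; exact hMle j0 (k0 - 1) (by omega)
      have hq1 : q1 ≤ 0 := by
        rw [hq1def]
        apply div_nonpos_of_nonpos_of_nonneg _ hhp.le
        linarith
      have hq2 : 0 ≤ q2 := by
        rw [hq2def]
        apply div_nonneg _ hhp.le
        linarith
      have hgg := hg1 j0 k0 hk1 hk2
      have hga : g j0 k0 (0, q2) ≤ g j0 k0 (q1, q2) := hgg.1 q1 0 q2 hq1
      have hgb : g j0 k0 (0, 0) ≤ g j0 k0 (0, q2) := hgg.2 0 0 q2 hq2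
      have hg0 : -net.gmax g ≤ g j0 k0 (0, 0) :=
        neg_le_of_abs_le (net.gmax_ge g j0 k0 hk1 hk2)
      have hD2 : -net.nu j0 * ((U j0 (k0 - 1) - 2 * U j0 k0 + U j0 (k0 + 1))
          / net.h j0 ^ 2) ≥ 0 := by
        rw [neg_mul]
        have h1 : (U j0 (k0 - 1) - 2 * U j0 k0 + U j0 (k0 + 1)) / net.h j0 ^ 2 ≤ 0 :=
          div_nonpos_of_nonpos_of_nonneg (by linarith) (by positivity)
        have h2 := mul_nonpos_of_nonneg_of_nonpos (net.nu_pos j0).le h1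
        linarith
      have hVb : V j0 k0 ≤ net.supnorm V :=
        (le_abs_self _).trans (net.abs_le_supnorm V j0 k0 hk0N)
      have hρU : ρ * U j0 k0 = ρ * Mx := by rw [hU0]
      linarith
lemma Net.sol_min (net : Net I J) (g : J → ℕ → ℝ × ℝ → ℝ)
    (hg1 : ∀ j k, 1 ≤ k → k ≤ net.N j - 1 → G1 (g j k))
    (V : J → ℕ → ℝ) (ρ : ℝ) (hρ : 0 < ρ) (U : J → ℕ → ℝ) (hU : net.Cont U)
    (heq : ∀ j k, 1 ≤ k → k ≤ net.N j - 1 →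
      -net.nu j * net.D2 U j k + g j k (net.Dh U j k) + ρ * U j k = V j k)
    (hS : ∀ i, net.S U (fun j k => V j k - ρ * U j k) i = 0) :
    ∀ j k, k ≤ net.N j → -(net.gmax g + net.supnorm V) ≤ ρ * U j k := by
  classical
  have hgm := net.gmax_nonneg g
  set Mn : ℝ := Finset.univ.inf' Finset.univ_nonempty (fun j =>
    (Finset.range (net.N j + 1)).inf'
      (Finset.nonempty_range_iff.mpr (Nat.succ_ne_zero _)) fun k => U j k) with hMndef
  have hMle : ∀ j k, k ≤ net.N j → Mn ≤ U j k := by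
    intro j k hk
    rw [hMndef]
    refine le_trans (Finset.inf'_le _ (Finset.mem_univ j)) ?_
    exact Finset.inf'_le (fun k => U j k) (Finset.mem_range.mpr (by omega))
  suffices hclaim : -(net.gmax g + net.supnorm V) ≤ ρ * Mn by
    intro j k hk
    have h1 := hMle j k hk
    nlinarith
  by_contra hgt
  push_neg at hgt
  obtain ⟨j0, -, hj0⟩ := Finset.exists_mem_eq_inf' Finset.univ_nonempty (fun j =>
    (Finset.range (net.N j + 1)).inf'
      (Finset.nonempty_range_iff.mpr (Nat.succ_ne_zero _)) fun k => U j k)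
  obtain ⟨k0, hk0mem, hk0⟩ := Finset.exists_mem_eq_inf'
    (s := Finset.range (net.N j0 + 1))
    (Finset.nonempty_range_iff.mpr (Nat.succ_ne_zero _)) (fun k => U j0 k)
  have hk0N : k0 ≤ net.N j0 := by have := Finset.mem_range.mp hk0mem; omega
  have hU0 : U j0 k0 = Mn := by rw [hMndef, hj0, hk0]
  have hVgt : ∀ j k, k ≤ net.N j → ρ * Mn < V j k := by
    intro j k hk
    have h1 : -net.supnorm V ≤ V j k := neg_le_of_abs_le (net.abs_le_supnorm V j k hk)
    linarith
  by_cases h0 : k0 = 0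
  · -- minimum attained at the vertex a j0
    subst h0
    have hSi := hS (net.a j0)
    rw [Net.S] at hSi
    have ha : (∑ j', if net.a j' = net.a j0 then net.h j' / 2 * (V j' 0 - ρ * Mn) else 0)
        ≤ ∑ j', if net.a j' = net.a j0 then
          net.nu j' * net.Dp U j' 0 + net.h j' / 2 * (V j' 0 - ρ * U j' 0) else 0 := by
      apply Finset.sum_le_sum
      intro j' _
      split_ifs with hc
      · have hU'0 : U j' 0 = Mn := by rw [hU.1 j' j0 hc]; exact hU0
        have hhp := net.h_pos j'
        have hDp : 0 ≤ net.nu j' * net.Dp U j' 0 := by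
          apply mul_nonneg (net.nu_pos j').le
          rw [Net.Dp]
          apply div_nonneg _ hhp.le
          have h1 := hMle j' (0 + 1) (by have := net.N_ge j'; omega)
          linarith
        rw [hU'0]
        linarith
      · exact le_rfl
    have hb : (∑ j', if net.b j' = net.a j0 then
          net.nu j' * net.Dp U j' (net.N j' - 1)
            - net.h j' / 2 * (V j' (net.N j') - ρ * U j' (net.N j')) else 0)
        ≤ ∑ j', if net.b j' = net.a j0 then
          -(net.h j' / 2 * (V j' (net.N j') - ρ * Mn)) else 0 := by
      apply Finset.sum_le_sum
      intro j' _
      split_ifs with hc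
      · have hU'N : U j' (net.N j') = Mn := by
          rw [← hU.2.2 j0 j' hc.symm]; exact hU0
        have hhp := net.h_pos j'
        have hN2 := net.N_ge j'
        have hDp : net.nu j' * net.Dp U j' (net.N j' - 1) ≤ 0 := by
          apply mul_nonpos_of_nonneg_of_nonpos (net.nu_pos j').le
          rw [Net.Dp]
          apply div_nonpos_of_nonpos_of_nonneg _ hhp.le
          have e : net.N j' - 1 + 1 = net.N j' := by omega
          rw [e, hU'N]
          have := hMle j' (net.N j' - 1) (by omega)
          linarith
        rw [hU'N]
        linarith
      · exact le_rfl
    have hQa_pos : 0 < ∑ j', if net.a j' = net.a j0 then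
        net.h j' / 2 * (V j' 0 - ρ * Mn) else 0 := by
      have hlt := Finset.sum_lt_sum
        (f := fun _ : J => (0:ℝ))
        (g := fun j' => if net.a j' = net.a j0 then
          net.h j' / 2 * (V j' 0 - ρ * Mn) else 0) (s := Finset.univ)
        (fun j' _ => by
          beta_reduce
          split_ifs with hc
          · have hhp := net.h_pos j'
            have := hVgt j' 0 (Nat.zero_le _)
            exact mul_nonneg (by positivity) (by linarith)
          · exact le_rfl)
        ⟨j0, Finset.mem_univ j0, by
          beta_reduce
          rw [if_pos rfl]
          exact mul_pos (by have := net.h_pos j0; positivity)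
            (by linarith [hVgt j0 0 (Nat.zero_le _)])⟩
      simpa using hlt
    have hQb_nonpos : (∑ j', if net.b j' = net.a j0 then
        -(net.h j' / 2 * (V j' (net.N j') - ρ * Mn)) else 0) ≤ 0 := by
      apply Finset.sum_nonpos
      intro j' _
      split_ifs with hc
      · have hhp := net.h_pos j'
        have := hVgt j' (net.N j') le_rfl
        have h2 : 0 ≤ net.h j' / 2 * (V j' (net.N j') - ρ * Mn) :=
          mul_nonneg (by positivity) (by linarith)
        linarith
      · exact le_rfl
    linarith
  · by_cases hN : k0 = net.N j0
    · -- minimum attained at the vertex b j0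
      have hU0N : U j0 (net.N j0) = Mn := by rw [← hN]; exact hU0
      have hSi := hS (net.b j0)
      rw [Net.S] at hSi
      have ha : (∑ j', if net.a j' = net.b j0 then
            net.h j' / 2 * (V j' 0 - ρ * Mn) else 0)
          ≤ ∑ j', if net.a j' = net.b j0 then
            net.nu j' * net.Dp U j' 0 + net.h j' / 2 * (V j' 0 - ρ * U j' 0) else 0 := by
        apply Finset.sum_le_sum
        intro j' _
        split_ifs with hc
        · have hU'0 : U j' 0 = Mn := by rw [hU.2.2 j' j0 hc]; exact hU0N
          have hhp := net.h_pos j'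
          have hDp : 0 ≤ net.nu j' * net.Dp U j' 0 := by
            apply mul_nonneg (net.nu_pos j').le
            rw [Net.Dp]
            apply div_nonneg _ hhp.le
            have h1 := hMle j' (0 + 1) (by have := net.N_ge j'; omega)
            linarith
          rw [hU'0]
          linarith
        · exact le_rfl
      have hb : (∑ j', if net.b j' = net.b j0 then
            net.nu j' * net.Dp U j' (net.N j' - 1)
              - net.h j' / 2 * (V j' (net.N j') - ρ * U j' (net.N j')) else 0)
          ≤ ∑ j', if net.b j' = net.b j0 then
            -(net.h j' / 2 * (V j' (net.N j') - ρ * Mn)) else 0 := by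
        apply Finset.sum_le_sum
        intro j' _
        split_ifs with hc
        · have hU'N : U j' (net.N j') = Mn := by rw [hU.2.1 j' j0 hc]; exact hU0N
          have hhp := net.h_pos j'
          have hN2 := net.N_ge j'
          have hDp : net.nu j' * net.Dp U j' (net.N j' - 1) ≤ 0 := by
            apply mul_nonpos_of_nonneg_of_nonpos (net.nu_pos j').le
            rw [Net.Dp]
            apply div_nonpos_of_nonpos_of_nonneg _ hhp.le
            have e : net.N j' - 1 + 1 = net.N j' := by omega
            rw [e, hU'N]
            have := hMle j' (net.N j' - 1) (by omega)
            linarith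
          rw [hU'N]
          linarith
        · exact le_rfl
      have hQa_nonneg : 0 ≤ ∑ j', if net.a j' = net.b j0 then
          net.h j' / 2 * (V j' 0 - ρ * Mn) else 0 := by
        apply Finset.sum_nonneg
        intro j' _
        split_ifs with hc
        · have hhp := net.h_pos j'
          have := hVgt j' 0 (Nat.zero_le _)
          exact mul_nonneg (by positivity) (by linarith)
        · exact le_rfl
      have hQb_neg : (∑ j', if net.b j' = net.b j0 then
          -(net.h j' / 2 * (V j' (net.N j') - ρ * Mn)) else 0) < 0 := by
        have hlt := Finset.sum_lt_sum
          (f := fun j' => if net.b j' = net.b j0 then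
            -(net.h j' / 2 * (V j' (net.N j') - ρ * Mn)) else 0)
          (g := fun _ : J => (0:ℝ)) (s := Finset.univ)
          (fun j' _ => by
            beta_reduce
            split_ifs with hc
            · have hhp := net.h_pos j'
              have := hVgt j' (net.N j') le_rfl
              have h2 : 0 ≤ net.h j' / 2 * (V j' (net.N j') - ρ * Mn) :=
                mul_nonneg (by positivity) (by linarith)
              linarith
            · exact le_rfl)
          ⟨j0, Finset.mem_univ j0, by
            beta_reduce
            rw [if_pos rfl]
            have hhp := net.h_pos j0
            have := hVgt j0 (net.N j0) le_rfl
            have h2 : 0 < net.h j0 / 2 * (V j0 (net.N j0) - ρ * Mn) :=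
              mul_pos (by positivity) (by linarith)
            linarith⟩
        simpa using hlt
      linarith
    · -- interior minimum
      have hk1 : 1 ≤ k0 := by omega
      have hk2 : k0 ≤ net.N j0 - 1 := by have := net.N_ge j0; omega
      have heqk := heq j0 k0 hk1 hk2
      rw [Net.D2, Net.Dh, Net.Dp, Net.Dp] at heqk
      have e : k0 - 1 + 1 = k0 := by omega
      rw [e] at heqk
      set q1 : ℝ := (U j0 (k0 + 1) - U j0 k0) / net.h j0 with hq1def
      set q2 : ℝ := (U j0 k0 - U j0 (k0 - 1)) / net.h j0 with hq2def
      have hhp := net.h_pos j0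
      have hup : U j0 k0 ≤ U j0 (k0 + 1) := by
        rw [hU0]; exact hMle j0 (k0 + 1) (by omega)
      have hdown : U j0 k0 ≤ U j0 (k0 - 1) := by
        rw [hU0]; exact hMle j0 (k0 - 1) (by omega)
      have hq1 : 0 ≤ q1 := by
        rw [hq1def]
        apply div_nonneg _ hhp.le
        linarith
      have hq2 : q2 ≤ 0 := by
        rw [hq2def]
        apply div_nonpos_of_nonpos_of_nonneg _ hhp.le
        linarith
      have hgg := hg1 j0 k0 hk1 hk2
      have hga : g j0 k0 (q1, q2) ≤ g j0 k0 (0, q2) := hgg.1 0 q1 q2 hq1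
      have hgb : g j0 k0 (0, q2) ≤ g j0 k0 (0, 0) := hgg.2 0 q2 0 hq2
      have hg0 : g j0 k0 (0, 0) ≤ net.gmax g :=
        (le_abs_self _).trans (net.gmax_ge g j0 k0 hk1 hk2)
      have hD2 : -net.nu j0 * ((U j0 (k0 - 1) - 2 * U j0 k0 + U j0 (k0 + 1))
          / net.h j0 ^ 2) ≤ 0 := by
        rw [neg_mul]
        have h1 : 0 ≤ (U j0 (k0 - 1) - 2 * U j0 k0 + U j0 (k0 + 1)) / net.h j0 ^ 2 :=
          div_nonneg (by linarith) (by positivity)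
        have h2 := mul_nonneg (net.nu_pos j0).le h1
        linarith
      have hVb : -net.supnorm V ≤ V j0 k0 :=
        neg_le_of_abs_le (net.abs_le_supnorm V j0 k0 hk0N)
      have hρU : ρ * U j0 k0 = ρ * Mn := by rw [hU0]
      linarith
end Aux5

/-- Existence and ‖·‖_∞ bound for the discrete ergodic
approximation of the Hamilton–Jacobi–Bellman equation on a network. -/
theorem stmt_0 {I J : Type} [Fintype I] [Fintype J] [Nonempty I] [Nonempty J]
    (net : Net I J) (g : J → ℕ → ℝ × ℝ → ℝ)
    (hg1 : ∀ j k, 1 ≤ k → k ≤ net.N j - 1 → G1 (g j k))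
    (hg3 : ∀ j k, 1 ≤ k → k ≤ net.N j - 1 → ContDiff ℝ 1 (g j k))
    (V : J → ℕ → ℝ) (hV : net.Cont V) (ρ : ℝ) (hρ : 0 < ρ) :
    (∃ U : J → ℕ → ℝ, net.Cont U ∧
      (∀ j k, 1 ≤ k → k ≤ net.N j - 1 →
        -net.nu j * net.D2 U j k + g j k (net.Dh U j k) + ρ * U j k = V j k) ∧
      (∀ i, net.S U (fun j k => V j k - ρ * U j k) i = 0)) ∧
    (∀ U : J → ℕ → ℝ, net.Cont U →
      (∀ j k, 1 ≤ k → k ≤ net.N j - 1 →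
        -net.nu j * net.D2 U j k + g j k (net.Dh U j k) + ρ * U j k = V j k) →
      (∀ i, net.S U (fun j k => V j k - ρ * U j k) i = 0) →
      net.supnorm U ≤ (net.gmax g + net.supnorm V) / ρ) := by
  constructor
  · exact net.exists_sol g hg1 hg3 V ρ hρ
  · intro U hUc heq hSe
    apply net.supnorm_le
    intro j k hk
    have h1 := net.sol_max g hg1 V ρ hρ U hUc heq hSe j k hk
    have h2 := net.sol_min g hg1 V ρ hρ U hUc heq hSe j k hk
    rw [abs_le]
    constructor
    · rw [← neg_div]
      rw [div_le_iff₀ hρ]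
      linarith
    · rw [le_div_iff₀ hρ]
      linarith
end

section
/- Fix the incidence data (I,J,a,b), diffusion coefficients ν_j>0, edge lengths l_j>0, constants α>0, C₀'∈ℝ, γ>1 for hypothesis (G4), and constants C₀>0, C_V>0. Then there exists a constant C (depending only on these data, and in particular not on the grid resolution) with the following property: for every choice of integers N_j≥3 with grid steps h_j=l_j/N_j, every family of numerical Hamiltonians g_{j,k} satisfying (G1), (G3) and (G4) with the constants α, C₀', γ, every grid function Ṽ continuous at vertices with ‖Ṽ‖_∞ ≤ C_V, and every grid function U, continuous at vertices, satisfying −ν_j(D²_hU)_{j,k} + g_{j,k}([D_hU]_{j,k}) = Ṽ_{j,k} for all j∈J, 1≤k≤N_j−1, S^h(U,Ṽ)_i = 0 for all i∈I, and ‖U‖_∞ ≤ C₀, one has max_{j∈J} max_{0≤k≤N_j−1} |(D⁺U)_{j,k}| ≤ C. -/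
open scoped BigOperators Classical

/-- A priori bound on the discrete gradient, uniform in the grid. -/
theorem stmt_2 {I J : Type} [Fintype I] [Fintype J] [Nonempty I] [Nonempty J]
    (a b : J → I) (ν l : J → ℝ) (hν : ∀ j, 0 < ν j) (hl : ∀ j, 0 < l j)
    (α C₀' γ : ℝ) (hα : 0 < α) (hγ : 1 < γ)
    (C₀ C_V : ℝ) (hC₀ : 0 < C₀) (hCV : 0 < C_V) :
    ∃ C : ℝ, ∀ net : Net I J,
      net.a = a → net.b = b → net.nu = ν →
      (∀ j, 3 ≤ net.N j) → (∀ j, net.h j = l j / net.N j) →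
      ∀ g : J → ℕ → ℝ × ℝ → ℝ,
        (∀ j k, 1 ≤ k → k ≤ net.N j - 1 → G1 (g j k)) →
        (∀ j k, 1 ≤ k → k ≤ net.N j - 1 → ContDiff ℝ 1 (g j k)) →
        (∀ j k, 1 ≤ k → k ≤ net.N j - 1 → G4 (g j k) α C₀' γ) →
      ∀ V : J → ℕ → ℝ, net.Cont V →
        (∀ j k, k ≤ net.N j → |V j k| ≤ C_V) →
      ∀ U : J → ℕ → ℝ, net.Cont U →
        (∀ j k, 1 ≤ k → k ≤ net.N j - 1 →
          -net.nu j * net.D2 U j k + g j k (net.Dh U j k) = V j k) →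
        (∀ i, net.S U V i = 0) →
        (∀ j k, k ≤ net.N j → |U j k| ≤ C₀) →
        ∀ j k, k ≤ net.N j - 1 → |net.Dp U j k| ≤ C := by

  classical
  obtain ⟨c, hcdef⟩ : ∃ c : ℝ, c = max (C₀' + C_V) 0 := ⟨_, rfl⟩
  have hc0 : (0:ℝ) ≤ c := by rw [hcdef]; exact le_max_right _ _
  have hcge : C₀' + C_V ≤ c := by rw [hcdef]; exact le_max_left _ _
  obtain ⟨Ga, hGadef⟩ : ∃ Ga : J → ℝ,
      Ga = fun j => ν j * (2 * C₀ / l j + l j * c / ν j) + l j * C_V := ⟨_, rfl⟩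
  obtain ⟨F, hFdef⟩ : ∃ F : ℝ, F = 3 * ∑ j', Ga j' := ⟨_, rfl⟩
  refine ⟨Finset.univ.sup' Finset.univ_nonempty (fun j => F / ν j + l j * c / ν j), ?_⟩
  intro net hA hB hNu hN3 hh g hG1 hG3 hG4 V hVc hVb U hUc hEq hKir hUb j k hk
  subst hA; subst hB; subst hNu
  have hhp := net.h_pos
  have hNh : ∀ j', (net.N j' : ℝ) * net.h j' = l j' := by
    intro j'
    have h3 := hN3 j'
    have hne : (net.N j' : ℝ) ≠ 0 := Nat.cast_ne_zero.mpr (by omega)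
    rw [hh j']; field_simp
  have hhle : ∀ j', net.h j' ≤ l j' := by
    intro j'
    have h3 := hN3 j'
    have hNpos : (1:ℝ) ≤ (net.N j' : ℝ) := by exact_mod_cast Nat.one_le_iff_ne_zero.mpr (by omega)
    nlinarith [hhp j', hNh j']
  -- lower bound on g along U
  have hgLB : ∀ j' k', 1 ≤ k' → k' ≤ net.N j' - 1 → -C₀' ≤ g j' k' (net.Dh U j' k') := by
    intro j' k' h1 h2
    have h4 := hG4 j' k' h1 h2 (net.Dh U j' k')
    have hbase : (0:ℝ) ≤ α *
        ((max (-(net.Dh U j' k').1) 0) ^ 2 + (max (net.Dh U j' k').2 0) ^ 2) ^ (γ / 2) :=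
      mul_nonneg hα.le (Real.rpow_nonneg (by positivity) _)
    linarith
  -- one step almost-monotonicity
  have hstep : ∀ j' k', 1 ≤ k' → k' ≤ net.N j' - 1 →
      net.Dp U j' (k' - 1) - net.h j' * c / net.nu j' ≤ net.Dp U j' k' := by
    intro j' k' h1 h2
    obtain ⟨m, rfl⟩ : ∃ m, k' = m + 1 := ⟨k' - 1, by omega⟩
    have heq := hEq j' (m+1) h1 h2
    have hVle : V j' (m+1) ≤ C_V := by
      have := hVb j' (m+1) (by have := hN3 j'; omega)
      exact (abs_le.mp this).2
    have hg := hgLB j' (m+1) h1 h2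
    have hD2 : net.D2 U j' (m+1) =
        (net.Dp U j' (m+1) - net.Dp U j' m) / net.h j' := by
      simp only [Net.D2, Net.Dp, Nat.add_sub_cancel]
      have hne := (hhp j').ne'
      field_simp
      ring
    rw [hD2] at heq
    have hν' := net.nu_pos j'
    have hhp' := hhp j'
    have hd : -c ≤ net.nu j' * ((net.Dp U j' (m+1) - net.Dp U j' m) / net.h j') := by
      linarith
    rw [← mul_div_assoc] at hd
    have hd2 : -c * net.h j' ≤ net.nu j' * (net.Dp U j' (m+1) - net.Dp U j' m) :=
      (le_div_iff₀ hhp').mp hd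
    have hd3 : -(net.Dp U j' (m+1) - net.Dp U j' m) ≤ net.h j' * c / net.nu j' := by
      rw [le_div_iff₀ hν']; nlinarith
    simp only [Nat.add_sub_cancel]
    linarith
  -- iterated almost-monotonicity
  have hkey : ∀ j' k', k' ≤ net.N j' - 1 → ∀ m, m ≤ k' →
      net.Dp U j' m - ((k' - m : ℕ) : ℝ) * (net.h j' * c / net.nu j') ≤ net.Dp U j' k' := by
    intro j' k'
    induction k' with
    | zero => intro _ m hm; interval_cases m; simp
    | succ n ih =>
      intro hn m hm
      have hnn : 0 ≤ net.h j' * c / net.nu j' :=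
        div_nonneg (mul_nonneg (hhp j').le hc0) (net.nu_pos j').le
      rcases Nat.eq_or_lt_of_le hm with he | hlt
      · rw [he]; simp
      · have hm' : m ≤ n := by omega
        have h1 := ih (by omega) m hm'
        have h2 := hstep j' (n+1) (by omega) hn
        simp only [Nat.add_sub_cancel] at h2
        have hcast : ((n + 1 - m : ℕ) : ℝ) = ((n - m : ℕ) : ℝ) + 1 := by
          have he2 : n + 1 - m = (n - m) + 1 := by omega
          rw [he2]; push_cast; ring
        rw [hcast]
        linarith
  have hchain : ∀ j' m k', m ≤ k' → k' ≤ net.N j' - 1 →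
      net.Dp U j' m - l j' * c / net.nu j' ≤ net.Dp U j' k' := by
    intro j' m k' hm hk'
    have h1 := hkey j' k' hk' m hm
    have h4 : ((k' - m : ℕ) : ℝ) ≤ (net.N j' : ℝ) := by
      have : (k' - m : ℕ) ≤ net.N j' := by omega
      exact_mod_cast this
    have h3 : ((k' - m : ℕ) : ℝ) * net.h j' ≤ l j' := by
      nlinarith [mul_le_mul_of_nonneg_right h4 (hhp j').le, hNh j']
    have h2 : ((k' - m : ℕ) : ℝ) * (net.h j' * c / net.nu j') ≤ l j' * c / net.nu j' := by
      have hnum : ((k' - m : ℕ) : ℝ) * net.h j' * c ≤ l j' * c :=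
        mul_le_mul_of_nonneg_right h3 hc0
      calc ((k' - m : ℕ) : ℝ) * (net.h j' * c / net.nu j')
          = ((k' - m : ℕ) : ℝ) * net.h j' * c / net.nu j' := by ring
        _ ≤ l j' * c / net.nu j' :=
            (div_le_div_iff_of_pos_right (net.nu_pos j')).mpr hnum
    linarith
  -- telescoping
  have htel : ∀ j', ∑ k' ∈ Finset.range (net.N j'), net.h j' * net.Dp U j' k'
      = U j' (net.N j') - U j' 0 := by
    intro j'
    have hterm : ∀ k', net.h j' * net.Dp U j' k' = U j' (k'+1) - U j' k' := by
      intro k'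
      simp only [Net.Dp]
      rw [mul_div_cancel₀ _ (hhp j').ne']
    simp_rw [hterm]
    exact Finset.sum_range_sub (fun k' => U j' k') (net.N j')
  have hUosc : ∀ j', |U j' (net.N j') - U j' 0| ≤ 2 * C₀ := by
    intro j'
    have h1 := abs_le.mp (hUb j' (net.N j') le_rfl)
    have h2 := abs_le.mp (hUb j' 0 (Nat.zero_le _))
    rw [abs_le]; constructor <;> linarith
  have hconstsum : ∀ x : ℝ, ∀ j', ∑ _k' ∈ Finset.range (net.N j'), net.h j' * x
      = l j' * x := by
    intro x j'
    rw [Finset.sum_const, Finset.card_range, nsmul_eq_mul, ← mul_assoc, hNh j']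
  have hex1 : ∀ j', ∃ m, m ≤ net.N j' - 1 ∧ net.Dp U j' m ≤ 2 * C₀ / l j' := by
    intro j'
    by_contra hcon
    push_neg at hcon
    have hstrict : ∑ k' ∈ Finset.range (net.N j'), net.h j' * (2 * C₀ / l j')
        < ∑ k' ∈ Finset.range (net.N j'), net.h j' * net.Dp U j' k' := by
      apply Finset.sum_lt_sum_of_nonempty
      · exact Finset.nonempty_range_iff.mpr (by have := hN3 j'; omega)
      · intro k' hk'
        have hk2 : k' ≤ net.N j' - 1 := by
          have := Finset.mem_range.mp hk'; have := hN3 j'; omega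
        exact mul_lt_mul_of_pos_left (hcon k' hk2) (hhp j')
    rw [htel j', hconstsum] at hstrict
    have hls : l j' * (2 * C₀ / l j') = 2 * C₀ := by
      rw [← mul_div_assoc]; exact mul_div_cancel_left₀ _ (hl j').ne'
    rw [hls] at hstrict
    have := (abs_le.mp (hUosc j')).2
    linarith
  have hex2 : ∀ j', ∃ m, m ≤ net.N j' - 1 ∧ -(2 * C₀ / l j') ≤ net.Dp U j' m := by
    intro j'
    by_contra hcon
    push_neg at hcon
    have hstrict : ∑ k' ∈ Finset.range (net.N j'), net.h j' * net.Dp U j' k'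
        < ∑ k' ∈ Finset.range (net.N j'), net.h j' * (-(2 * C₀ / l j')) := by
      apply Finset.sum_lt_sum_of_nonempty
      · exact Finset.nonempty_range_iff.mpr (by have := hN3 j'; omega)
      · intro k' hk'
        have hk2 : k' ≤ net.N j' - 1 := by
          have := Finset.mem_range.mp hk'; have := hN3 j'; omega
        exact mul_lt_mul_of_pos_left (hcon k' hk2) (hhp j')
    rw [htel j', hconstsum] at hstrict
    have hls : l j' * (-(2 * C₀ / l j')) = -(2 * C₀) := by
      rw [mul_neg, ← mul_div_assoc, mul_div_cancel_left₀ _ (hl j').ne']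
    rw [hls] at hstrict
    have := (abs_le.mp (hUosc j')).1
    linarith
  -- bounds on endpoint gradients from the telescoping
  have hP0 : ∀ j', net.Dp U j' 0 ≤ 2 * C₀ / l j' + l j' * c / net.nu j' := by
    intro j'
    obtain ⟨m, hm1, hm2⟩ := hex1 j'
    have := hchain j' 0 m (Nat.zero_le _) hm1
    linarith
  have hPN : ∀ j', -(2 * C₀ / l j') - l j' * c / net.nu j' ≤
      net.Dp U j' (net.N j' - 1) := by
    intro j'
    obtain ⟨m, hm1, hm2⟩ := hex2 j'
    have := hchain j' m (net.N j' - 1) hm1 le_rfl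
    linarith
  have hGann : ∀ j', 0 ≤ Ga j' := by
    intro j'
    have hν' := net.nu_pos j'
    have hl' := hl j'
    have h1 : 0 ≤ 2 * C₀ / l j' := div_nonneg (by linarith) hl'.le
    have h2 : 0 ≤ l j' * c / net.nu j' := div_nonneg (mul_nonneg hl'.le hc0) hν'.le
    have h3 : 0 ≤ l j' * C_V := mul_nonneg hl'.le hCV.le
    rw [hGadef]
    dsimp only
    nlinarith
  have hVterm : ∀ j' k', k' ≤ net.N j' → net.h j' / 2 * V j' k' ≤ l j' * C_V := by
    intro j' k' hk'
    have hv := (abs_le.mp (hVb j' k' hk')).2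
    have hhalf : (0:ℝ) ≤ net.h j' / 2 := by linarith [hhp j']
    have h4 : net.h j' / 2 * V j' k' ≤ net.h j' / 2 * C_V :=
      mul_le_mul_of_nonneg_left hv hhalf
    have h5 : net.h j' / 2 * C_V ≤ l j' * C_V :=
      mul_le_mul_of_nonneg_right (by linarith [hhle j', hhp j']) hCV.le
    linarith
  have hVterm' : ∀ j' k', k' ≤ net.N j' → -(l j' * C_V) ≤ net.h j' / 2 * V j' k' := by
    intro j' k' hk'
    have hv := (abs_le.mp (hVb j' k' hk')).1
    have hhalf : (0:ℝ) ≤ net.h j' / 2 := by linarith [hhp j']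
    have h4 : net.h j' / 2 * (-C_V) ≤ net.h j' / 2 * V j' k' :=
      mul_le_mul_of_nonneg_left hv hhalf
    have h5 : -(l j' * C_V) ≤ net.h j' / 2 * (-C_V) := by
      have h6 : net.h j' / 2 * C_V ≤ l j' * C_V :=
        mul_le_mul_of_nonneg_right (by linarith [hhle j', hhp j']) hCV.le
      linarith
    linarith
  have hGaV : ∀ j', l j' * C_V ≤ Ga j' := by
    intro j'
    have hν' := net.nu_pos j'
    have hl' := hl j'
    have h1 : 0 ≤ 2 * C₀ / l j' := div_nonneg (by linarith) hl'.le
    have h2 : 0 ≤ l j' * c / net.nu j' := div_nonneg (mul_nonneg hl'.le hc0) hν'.le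
    rw [hGadef]; dsimp only
    nlinarith
  have htermA : ∀ i j', (if net.a j' = i then
      net.nu j' * net.Dp U j' 0 + net.h j' / 2 * V j' 0 else 0) ≤ Ga j' := by
    intro i j'
    split_ifs with hif
    · have h2 : net.nu j' * net.Dp U j' 0
          ≤ net.nu j' * (2 * C₀ / l j' + l j' * c / net.nu j') :=
        mul_le_mul_of_nonneg_left (hP0 j') (net.nu_pos j').le
      have h3 := hVterm j' 0 (Nat.zero_le _)
      rw [hGadef]; dsimp only
      linarith
    · exact hGann j'
  have htermB : ∀ i j', -Ga j' ≤ (if net.b j' = i then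
      net.nu j' * net.Dp U j' (net.N j' - 1) - net.h j' / 2 * V j' (net.N j') else 0) := by
    intro i j'
    split_ifs with hif
    · have h2 : net.nu j' * (-(2 * C₀ / l j') - l j' * c / net.nu j')
          ≤ net.nu j' * net.Dp U j' (net.N j' - 1) :=
        mul_le_mul_of_nonneg_left (hPN j') (net.nu_pos j').le
      have h3 := hVterm j' (net.N j') le_rfl
      rw [hGadef]; dsimp only
      nlinarith [net.nu_pos j']
    · linarith [hGann j']
  have hGaSum : ∀ j₀ : J, Ga j₀ ≤ ∑ j', Ga j' :=
    fun j₀ => Finset.single_le_sum (fun j' _ => hGann j') (Finset.mem_univ j₀)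
  -- Kirchhoff upper bound at right endpoints
  have hupper : ∀ j₀, net.nu j₀ * net.Dp U j₀ (net.N j₀ - 1) ≤ F := by
    intro j₀
    have hs := hKir (net.b j₀)
    simp only [Net.S] at hs
    set fa : J → ℝ := fun j' => if net.a j' = net.b j₀ then
      net.nu j' * net.Dp U j' 0 + net.h j' / 2 * V j' 0 else 0 with hfa
    set fb : J → ℝ := fun j' => if net.b j' = net.b j₀ then
      net.nu j' * net.Dp U j' (net.N j' - 1) - net.h j' / 2 * V j' (net.N j') else 0 with hfb
    have hsplit : ∑ j', fb j' = fb j₀ + ∑ j' ∈ Finset.univ.erase j₀, fb j' :=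
      (Finset.add_sum_erase _ fb (Finset.mem_univ j₀)).symm
    have hfbj : fb j₀ = net.nu j₀ * net.Dp U j₀ (net.N j₀ - 1)
        - net.h j₀ / 2 * V j₀ (net.N j₀) := by
      rw [hfb]; simp
    have hSA : ∑ j', fa j' ≤ ∑ j', Ga j' :=
      Finset.sum_le_sum (fun j' _ => htermA _ j')
    have hSBerase : -(∑ j' ∈ Finset.univ.erase j₀, Ga j')
        ≤ ∑ j' ∈ Finset.univ.erase j₀, fb j' := by
      have h1 : ∑ j' ∈ Finset.univ.erase j₀, -Ga j'
          ≤ ∑ j' ∈ Finset.univ.erase j₀, fb j' :=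
        Finset.sum_le_sum (fun j' _ => htermB _ j')
      simpa using h1
    have hGaerase : ∑ j' ∈ Finset.univ.erase j₀, Ga j' ≤ ∑ j', Ga j' :=
      Finset.sum_le_sum_of_subset_of_nonneg (Finset.subset_univ _)
        (fun j' _ _ => hGann j')
    have hVN : net.h j₀ / 2 * V j₀ (net.N j₀) ≤ Ga j₀ :=
      le_trans (hVterm j₀ (net.N j₀) le_rfl) (hGaV j₀)
    rw [hFdef]
    have hGaS := hGaSum j₀
    rw [hsplit, hfbj] at hs
    have hSA2 : Finset.univ.sum fa ≤ ∑ j' : J, Ga j' := hSA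
    linarith
  -- Kirchhoff lower bound at left endpoints
  have hlower : ∀ j₀, -F ≤ net.nu j₀ * net.Dp U j₀ 0 := by
    intro j₀
    have hs := hKir (net.a j₀)
    simp only [Net.S] at hs
    set fa : J → ℝ := fun j' => if net.a j' = net.a j₀ then
      net.nu j' * net.Dp U j' 0 + net.h j' / 2 * V j' 0 else 0 with hfa
    set fb : J → ℝ := fun j' => if net.b j' = net.a j₀ then
      net.nu j' * net.Dp U j' (net.N j' - 1) - net.h j' / 2 * V j' (net.N j') else 0 with hfb
    have hsplit : ∑ j', fa j' = fa j₀ + ∑ j' ∈ Finset.univ.erase j₀, fa j' :=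
      (Finset.add_sum_erase _ fa (Finset.mem_univ j₀)).symm
    have hfaj : fa j₀ = net.nu j₀ * net.Dp U j₀ 0 + net.h j₀ / 2 * V j₀ 0 := by
      rw [hfa]; simp
    have hSB : -(∑ j', Ga j') ≤ ∑ j', fb j' := by
      have h1 : ∑ j', -Ga j' ≤ ∑ j', fb j' :=
        Finset.sum_le_sum (fun j' _ => htermB _ j')
      simpa using h1
    have hSAerase : ∑ j' ∈ Finset.univ.erase j₀, fa j'
        ≤ ∑ j' ∈ Finset.univ.erase j₀, Ga j' :=
      Finset.sum_le_sum (fun j' _ => htermA _ j')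
    have hGaerase : ∑ j' ∈ Finset.univ.erase j₀, Ga j' ≤ ∑ j', Ga j' :=
      Finset.sum_le_sum_of_subset_of_nonneg (Finset.subset_univ _)
        (fun j' _ _ => hGann j')
    have hV0 : net.h j₀ / 2 * V j₀ 0 ≤ Ga j₀ :=
      le_trans (hVterm j₀ 0 (Nat.zero_le _)) (hGaV j₀)
    rw [hFdef]
    have hGaS := hGaSum j₀
    rw [hsplit, hfaj] at hs
    have hSB2 : -(∑ j' : J, Ga j') ≤ Finset.univ.sum fb := hSB
    have hfin : net.nu j₀ * net.Dp U j₀ 0 = Finset.univ.sum fb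
        - net.h j₀ / 2 * V j₀ 0 - ∑ j' ∈ Finset.univ.erase j₀, fa j' := by
      linarith
    rw [hfin]
    linarith
  -- conclusion
  have hν0 := net.nu_pos j
  have hDp_up : net.Dp U j k ≤ F / net.nu j + l j * c / net.nu j := by
    have h1 := hchain j k (net.N j - 1) hk le_rfl
    have h2 := hupper j
    have h3 : net.Dp U j (net.N j - 1) ≤ F / net.nu j := by
      rw [le_div_iff₀ hν0]; linarith
    linarith
  have hDp_lo : -(F / net.nu j + l j * c / net.nu j) ≤ net.Dp U j k := by
    have h1 := hchain j 0 k (Nat.zero_le _) hk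
    have h2 := hlower j
    have h3 : -F / net.nu j ≤ net.Dp U j 0 := by
      rw [div_le_iff₀ hν0]; linarith
    rw [neg_div] at h3
    linarith
  have habs : |net.Dp U j k| ≤ F / net.nu j + l j * c / net.nu j :=
    abs_le.mpr ⟨hDp_lo, hDp_up⟩
  exact le_trans habs (Finset.le_sup' (fun j' => F / net.nu j' + l j' * c / net.nu j') (Finset.mem_univ j))
end
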